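/- arXiv:1101.5926 — 4 statements merged into one kernel-verified Lean document; each statement's English description precedes it below -/
import Mathlib

section
/- (Expander Mixing Lemma for Weighted Graphs) Let G=(V,W) be an edge-weighted graph with positive generalized degrees and Vol(V)=1, and let B_D be its normalized modularity matrix. Then for all subsets X, Y ⊆ V: |w(X,Y) − Vol(X)Vol(Y)| ≤ ‖B_D‖·√(Vol(X)(1−Vol(X))·Vol(Y)(1−Vol(Y))) ≤ ‖B_D‖·√(Vol(X)Vol(Y)), where ‖B_D‖ is the spectral norm of B_D. -/
open Finset Matrix

noncomputable section

/-- weighted cut between two vertex subsets: `w(X,Y) = ∑_{i∈X} ∑_{j∈Y} w_{ij}` -/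
def wcut {n : ℕ} (W : Matrix (Fin n) (Fin n) ℝ) (X Y : Finset (Fin n)) : ℝ :=
  ∑ i ∈ X, ∑ j ∈ Y, W i j

/-- generalized degree `d_i = ∑_j w_{ij}` -/
def gdeg {n : ℕ} (W : Matrix (Fin n) (Fin n) ℝ) (i : Fin n) : ℝ := ∑ j, W i j

/-- volume of a vertex subset: `Vol(U) = ∑_{i∈U} d_i` -/
def gvol {n : ℕ} (W : Matrix (Fin n) (Fin n) ℝ) (U : Finset (Fin n)) : ℝ :=
  ∑ i ∈ U, gdeg W i

/-- the normalized adjacency matrix `D^{-1/2} W D^{-1/2}` -/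
def normAdj {n : ℕ} (W : Matrix (Fin n) (Fin n) ℝ) : Matrix (Fin n) (Fin n) ℝ :=
  Matrix.of fun i j => W i j / (Real.sqrt (gdeg W i) * Real.sqrt (gdeg W j))

/-- the normalized Laplacian `L_D = I - D^{-1/2} W D^{-1/2}` -/
def normLap {n : ℕ} (W : Matrix (Fin n) (Fin n) ℝ) : Matrix (Fin n) (Fin n) ℝ :=
  1 - normAdj W

/-- the normalized modularity matrix `B_D = D^{-1/2} W D^{-1/2} - √d √dᵀ` -/
def modMat {n : ℕ} (W : Matrix (Fin n) (Fin n) ℝ) : Matrix (Fin n) (Fin n) ℝ :=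
  normAdj W - Matrix.of fun i j => Real.sqrt (gdeg W i) * Real.sqrt (gdeg W j)

/-- Euclidean inner product on `ℝ^n` -/
def dotR {n : ℕ} (u v : Fin n → ℝ) : ℝ := ∑ i, u i * v i

/-- a family of pairwise orthogonal unit-norm vectors of `ℝ^n` -/
def IsOrthonormalSys {m n : ℕ} (u : Fin m → Fin n → ℝ) : Prop :=
  ∀ i j, dotR (u i) (u j) = if i = j then 1 else 0

/-- spectral norm (largest singular value) of a real matrix -/
def specNorm {n : ℕ} (M : Matrix (Fin n) (Fin n) ℝ) : ℝ :=
  ‖Matrix.toEuclideanCLM (𝕜 := ℝ) M‖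

/-- connectivity of the weighted graph (irreducibility of `W`) -/
def gConnected {n : ℕ} (W : Matrix (Fin n) (Fin n) ℝ) : Prop :=
  (SimpleGraph.fromRel fun i j => W i j ≠ 0).Connected

/-- the `a`-th cluster of the partition encoded by `P : Fin n → Fin k` -/
def partSet {n k : ℕ} (P : Fin n → Fin k) (a : Fin k) : Finset (Fin n) :=
  univ.filter fun j => P j = a

/-- `(A,B)` is an `α`-volume regular pair:
for all `X ⊆ A`, `Y ⊆ B`, `|w(X,Y) - ρ(A,B) Vol(X) Vol(Y)| ≤ α √(Vol(A) Vol(B))`,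
where `ρ(A,B) = w(A,B)/(Vol(A) Vol(B))`. -/
def volReg {n : ℕ} (W : Matrix (Fin n) (Fin n) ℝ) (α : ℝ) (A B : Finset (Fin n)) : Prop :=
  ∀ X ⊆ A, ∀ Y ⊆ B,
    |wcut W X Y - wcut W A B / (gvol W A * gvol W B) * (gvol W X * gvol W Y)|
      ≤ α * Real.sqrt (gvol W A * gvol W B)

/-- isoperimetric number `h(G) = min_{U : Vol(U) ≤ 1/2} w(U, U̅)/Vol(U)` -/
def isoNum {n : ℕ} (W : Matrix (Fin n) (Fin n) ℝ) : ℝ :=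
  sInf {r | ∃ U : Finset (Fin n), U.Nonempty ∧ gvol W U ≤ 1/2 ∧ r = wcut W U Uᶜ / gvol W U}

/-- weighted cluster center of scalar vertex representatives -/
def sCenter {n k : ℕ} (d : Fin n → ℝ) (x : Fin n → ℝ) (P : Fin n → Fin k) (a : Fin k) : ℝ :=
  (∑ j ∈ partSet P a, d j)⁻¹ * ∑ j ∈ partSet P a, d j * x j

/-- weighted k-variance of scalar vertex representatives w.r.t. the partition `P` -/
def sVar {n k : ℕ} (d : Fin n → ℝ) (x : Fin n → ℝ) (P : Fin n → Fin k) : ℝ :=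
  ∑ a, ∑ j ∈ partSet P a, d j * (x j - sCenter d x P a) ^ 2

/-- minimum weighted 2-variance `S_2²` of scalar vertex representatives -/
def S2var {n : ℕ} (d : Fin n → ℝ) (x : Fin n → ℝ) : ℝ :=
  sInf {r | ∃ P : Fin n → Fin 2, Function.Surjective P ∧ r = sVar d x P}

/-- weighted cluster center of vector vertex representatives -/
def vCenter {n k m : ℕ} (d : Fin n → ℝ) (x : Fin n → Fin m → ℝ) (P : Fin n → Fin k) (a : Fin k) :
    Fin m → ℝ :=
  fun t => (∑ j ∈ partSet P a, d j)⁻¹ * ∑ j ∈ partSet P a, d j * x j t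

/-- weighted k-variance `S_k²(P, X)` of vector vertex representatives w.r.t. the partition `P` -/
def kVar {n k m : ℕ} (d : Fin n → ℝ) (x : Fin n → Fin m → ℝ) (P : Fin n → Fin k) : ℝ :=
  ∑ a, ∑ j ∈ partSet P a, d j * ∑ t, (x j t - vCenter d x P a t) ^ 2

/-- normalized k-way cut of the partition `P`  -/
def fkCut {n k : ℕ} (W : Matrix (Fin n) (Fin n) ℝ) (P : Fin n → Fin k) : ℝ :=
  ∑ a, ∑ b ∈ univ.filter (fun b => a < b),
    (1 / gvol W (partSet P a) + 1 / gvol W (partSet P b)) * wcut W (partSet P a) (partSet P b)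

/-- minimum normalized k-way cut `f_k(G)` (minimum over k-partitions with nonempty parts) -/
def fkMin {n : ℕ} (k : ℕ) (W : Matrix (Fin n) (Fin n) ℝ) : ℝ :=
  sInf {r | ∃ P : Fin n → Fin k, Function.Surjective P ∧ r = fkCut W P}

/-- normalized k-way Newman-Girvan modularity of the partition `P` -/
def QMod {n k : ℕ} (W : Matrix (Fin n) (Fin n) ℝ) (P : Fin n → Fin k) : ℝ :=
  ∑ a, (gvol W (partSet P a))⁻¹ *
    (∑ i ∈ partSet P a, ∑ j ∈ partSet P a, (W i j - gdeg W i * gdeg W j))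

/-- squared Euclidean distance of a vector from a linear subspace of `ℝ^n` -/
def distSqToSub {n : ℕ} (u : Fin n → ℝ) (F : Submodule ℝ (Fin n → ℝ)) : ℝ :=
  sInf {r | ∃ v ∈ F, r = dotR (u - v) (u - v)}


/-- Expander Mixing Lemma for weighted graphs. -/
theorem statement3 {n : ℕ} (W : Matrix (Fin n) (Fin n) ℝ)
    (hsym : W.IsSymm) (hnn : ∀ i j, 0 ≤ W i j) (hdiag : ∀ i, W i i = 0)
    (hd : ∀ i, 0 < gdeg W i) (hvol : gvol W Finset.univ = 1) :
    ∀ X Y : Finset (Fin n),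
      |wcut W X Y - gvol W X * gvol W Y|
          ≤ specNorm (modMat W) *
            Real.sqrt (gvol W X * (1 - gvol W X) * (gvol W Y * (1 - gvol W Y))) ∧
      specNorm (modMat W) *
          Real.sqrt (gvol W X * (1 - gvol W X) * (gvol W Y * (1 - gvol W Y)))
        ≤ specNorm (modMat W) * Real.sqrt (gvol W X * gvol W Y) := by
  intro X Y
  set d : Fin n → ℝ := gdeg W with hd_def
  set sd : Fin n → ℝ := fun i => Real.sqrt (d i) with hsd_def
  have hsdpos : ∀ i, 0 < sd i := fun i => Real.sqrt_pos.mpr (hd i)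
  have hsd2 : ∀ i, sd i * sd i = d i := fun i => Real.mul_self_sqrt (hd i).le
  set a := gvol W X with ha_def
  set b := gvol W Y with hb_def
  -- basic volume bounds
  have hvol_bounds : ∀ Z : Finset (Fin n), 0 ≤ gvol W Z ∧ gvol W Z ≤ 1 := by
    intro Z
    constructor
    · exact Finset.sum_nonneg fun i _ => (hd i).le
    · rw [← hvol]
      exact Finset.sum_le_sum_of_subset_of_nonneg (Finset.subset_univ Z)
        (fun i _ _ => (hd i).le)
  obtain ⟨ha0, ha1⟩ := hvol_bounds X
  obtain ⟨hb0, hb1⟩ := hvol_bounds Y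
  -- the test vectors
  set cX : Fin n → ℝ := fun i => (if i ∈ X then (1:ℝ) else 0) - a with hcX_def
  set cY : Fin n → ℝ := fun i => (if i ∈ Y then (1:ℝ) else 0) - b with hcY_def
  set u : Fin n → ℝ := fun i => cX i * sd i with hu_def
  set v : Fin n → ℝ := fun i => cY i * sd i with hv_def
  -- key sum facts
  have hsum_c : ∀ (Z : Finset (Fin n)) (c : ℝ), c = gvol W Z →
      ∑ i, ((if i ∈ Z then (1:ℝ) else 0) - c) * d i = 0 := by
    intro Z c hc
    have : ∑ i, ((if i ∈ Z then (1:ℝ) else 0) - c) * d i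
        = (∑ i, (if i ∈ Z then d i else 0)) - c * ∑ i, d i := by
      rw [Finset.mul_sum, ← Finset.sum_sub_distrib]
      congr 1; ext i; split <;> ring
    rw [this, Finset.sum_ite_mem, Finset.univ_inter]
    have : ∑ i, d i = 1 := hvol
    rw [this, hc]
    simp [gvol, hd_def]
  have hcXd : ∑ i, cX i * d i = 0 := hsum_c X a ha_def
  have hcYd : ∑ i, cY i * d i = 0 := hsum_c Y b hb_def
  -- column sums of W equal degrees
  have hcol : ∀ j, ∑ i, W i j = d j := by
    intro j
    have : ∀ i, W i j = W j i := fun i => by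
      have := congrFun (congrFun hsym j) i
      simpa [Matrix.transpose_apply] using this
    simp_rw [this]; rfl
  -- Step A: bilinear form equals wcut - a*b
  have hbilin : ∑ i, ∑ j, u i * (modMat W i j * v j) = wcut W X Y - a * b := by
    have hpoint : ∀ i j, u i * (modMat W i j * v j)
        = cX i * (cY j * W i j) - (cX i * d i) * (cY j * d j) := by
      intro i j
      have hi := (hsdpos i).ne'
      have hj := (hsdpos j).ne'
      simp only [hu_def, hv_def, modMat, normAdj, Matrix.sub_apply, Matrix.of_apply,
        ← hd_def, ← hsd_def]
      rw [← hsd2 i, ← hsd2 j]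
      field_simp
      simp only [Real.sqrt_sq (hsdpos i).le, Real.sqrt_sq (hsdpos j).le]
      ring
    simp_rw [hpoint, Finset.sum_sub_distrib]
    have h2 : ∑ i, ∑ j, (cX i * d i) * (cY j * d j)
        = (∑ i, cX i * d i) * (∑ j, cY j * d j) := by
      rw [Finset.sum_mul_sum]
    rw [h2, hcXd, zero_mul, sub_zero]
    -- now compute ∑ i ∑ j cX i * (cY j * W i j)
    have hinner : ∀ i, ∑ j, cY j * W i j = (∑ j ∈ Y, W i j) - b * d i := by
      intro i
      have : ∑ j, cY j * W i j
          = (∑ j, if j ∈ Y then W i j else 0) - b * ∑ j, W i j := by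
        rw [Finset.mul_sum, ← Finset.sum_sub_distrib]
        congr 1; ext j; simp only [hcY_def]; split <;> ring
      rw [this, Finset.sum_ite_mem, Finset.univ_inter]
      rfl
    have : ∑ i, ∑ j, cX i * (cY j * W i j)
        = ∑ i, cX i * ((∑ j ∈ Y, W i j) - b * d i) := by
      congr 1; ext i; rw [← Finset.mul_sum, hinner i]
    rw [this]
    have : ∑ i, cX i * ((∑ j ∈ Y, W i j) - b * d i)
        = (∑ i, cX i * ∑ j ∈ Y, W i j) - b * ∑ i, cX i * d i := by
      rw [Finset.mul_sum, ← Finset.sum_sub_distrib]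
      congr 1; ext i; ring
    rw [this, hcXd, mul_zero, sub_zero]
    have : ∑ i, cX i * ∑ j ∈ Y, W i j
        = (∑ i, if i ∈ X then ∑ j ∈ Y, W i j else 0) - a * ∑ i, ∑ j ∈ Y, W i j := by
      rw [Finset.mul_sum, ← Finset.sum_sub_distrib]
      congr 1; ext i; simp only [hcX_def]; split <;> ring
    rw [this, Finset.sum_ite_mem, Finset.univ_inter]
    have hYsum : ∑ i, ∑ j ∈ Y, W i j = b := by
      rw [show ∑ i, ∑ j ∈ Y, W i j = ∑ j ∈ Y, ∑ i, W i j from Finset.sum_comm]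
      simp_rw [hcol]
      rfl
    rw [hYsum]
    rfl
  -- Step B: norms of the test vectors
  have hnormsq : ∀ (Z : Finset (Fin n)) (c : ℝ), c = gvol W Z →
      ∑ i, (((if i ∈ Z then (1:ℝ) else 0) - c) * sd i) ^ 2 = c * (1 - c) := by
    intro Z c hc
    have hpt : ∀ i, (((if i ∈ Z then (1:ℝ) else 0) - c) * sd i) ^ 2
        = ((if i ∈ Z then (1 - 2*c) * d i else 0) + c^2 * d i) := by
      intro i
      rw [← hsd2 i]
      split <;> ring
    simp_rw [hpt, Finset.sum_add_distrib, Finset.sum_ite_mem, Finset.univ_inter,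
      ← Finset.mul_sum]
    have h1 : ∑ i ∈ Z, d i = c := hc.symm
    have h2 : ∑ i, d i = 1 := hvol
    rw [h1, h2]
    ring
  -- package into EuclideanSpace
  set U : EuclideanSpace ℝ (Fin n) := (WithLp.equiv 2 _).symm u with hU_def
  set V : EuclideanSpace ℝ (Fin n) := (WithLp.equiv 2 _).symm v with hV_def
  have hUnorm : ‖U‖ = Real.sqrt (a * (1 - a)) := by
    rw [EuclideanSpace.norm_eq]
    congr 1
    have : ∀ i, ‖U i‖ ^ 2 = (cX i * sd i) ^ 2 := by
      intro i
      rw [Real.norm_eq_abs, sq_abs]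
      rfl
    simp_rw [this]
    exact hnormsq X a ha_def
  have hVnorm : ‖V‖ = Real.sqrt (b * (1 - b)) := by
    rw [EuclideanSpace.norm_eq]
    congr 1
    have : ∀ i, ‖V i‖ ^ 2 = (cY i * sd i) ^ 2 := by
      intro i
      rw [Real.norm_eq_abs, sq_abs]
      rfl
    simp_rw [this]
    exact hnormsq Y b hb_def
  -- inner product identity
  have hinnerUV : (inner ℝ U ((Matrix.toEuclideanCLM (𝕜 := ℝ) (modMat W)) V) : ℝ)
      = ∑ i, ∑ j, u i * (modMat W i j * v j) := by
    rw [hV_def, Matrix.inner_toEuclideanCLM, hU_def]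
    simp only [dotProduct, Matrix.toLin'_apply, Matrix.mulVec, dotProduct,
      star_trivial, Pi.star_apply, WithLp.equiv_symm_apply]
    simp_rw [Finset.mul_sum]
  -- Cauchy–Schwarz + operator norm bound
  have hmain : |wcut W X Y - a * b|
      ≤ specNorm (modMat W) * Real.sqrt (a * (1 - a) * (b * (1 - b))) := by
    have h1 : |(inner ℝ U ((Matrix.toEuclideanCLM (𝕜 := ℝ) (modMat W)) V) : ℝ)|
        ≤ ‖U‖ * ‖(Matrix.toEuclideanCLM (𝕜 := ℝ) (modMat W)) V‖ :=
      abs_real_inner_le_norm _ _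
    have h2 : ‖(Matrix.toEuclideanCLM (𝕜 := ℝ) (modMat W)) V‖
        ≤ specNorm (modMat W) * ‖V‖ :=
      ContinuousLinearMap.le_opNorm _ _
    have h3 : |wcut W X Y - a * b| ≤ ‖U‖ * (specNorm (modMat W) * ‖V‖) := by
      rw [← hbilin, ← hinnerUV]
      exact h1.trans (mul_le_mul_of_nonneg_left h2 (norm_nonneg _))
    calc |wcut W X Y - a * b| ≤ ‖U‖ * (specNorm (modMat W) * ‖V‖) := h3
      _ = specNorm (modMat W) * (‖U‖ * ‖V‖) := by ring
      _ = specNorm (modMat W) * Real.sqrt (a * (1 - a) * (b * (1 - b))) := by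
          rw [hUnorm, hVnorm, ← Real.sqrt_mul (by nlinarith)]
  refine ⟨hmain, ?_⟩
  apply mul_le_mul_of_nonneg_left _ (norm_nonneg _)
  apply Real.sqrt_le_sqrt
  nlinarith [mul_nonneg ha0 hb0, mul_nonneg (mul_nonneg ha0 hb0) ha0,
    mul_nonneg (mul_nonneg ha0 hb0) hb0, mul_nonneg (mul_nonneg (mul_nonneg ha0 hb0) ha0) hb0]


end
end

section
/- Let G=(V,W) be a connected edge-weighted graph with Vol(V)=1 and let λ_2 be the second smallest eigenvalue of the normalized Laplacian L_D. Then the isoperimetric number satisfies h(G) ≤ min{1, √(2λ_2)}. -/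
open Finset Matrix

noncomputable section

namespace Stmt5Aux

open Finset Matrix

variable {n : ℕ}

lemma gdeg_nonneg (W : Matrix (Fin n) (Fin n) ℝ) (hnn : ∀ i j, 0 ≤ W i j) (i : Fin n) :
    0 ≤ gdeg W i :=
  Finset.sum_nonneg fun j _ => hnn i j

lemma col_sum (W : Matrix (Fin n) (Fin n) ℝ) (hsym : W.IsSymm) (j : Fin n) :
    ∑ i, W i j = gdeg W j := by
  unfold gdeg
  exact Finset.sum_congr rfl fun i _ => by
    have := congrFun (congrFun hsym.eq i) j
    simpa [Matrix.transpose_apply] using this.symm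

lemma wcut_nonneg (W : Matrix (Fin n) (Fin n) ℝ) (hnn : ∀ i j, 0 ≤ W i j)
    (X Y : Finset (Fin n)) : 0 ≤ wcut W X Y :=
  Finset.sum_nonneg fun i _ => Finset.sum_nonneg fun j _ => hnn i j

lemma gvol_nonneg (W : Matrix (Fin n) (Fin n) ℝ) (hnn : ∀ i j, 0 ≤ W i j)
    (U : Finset (Fin n)) : 0 ≤ gvol W U :=
  Finset.sum_nonneg fun i _ => gdeg_nonneg W hnn i

lemma gvol_pos (W : Matrix (Fin n) (Fin n) ℝ) (hd : ∀ i, 0 < gdeg W i)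
    {U : Finset (Fin n)} (hU : U.Nonempty) : 0 < gvol W U :=
  Finset.sum_pos (fun i _ => hd i) hU

lemma gvol_mono (W : Matrix (Fin n) (Fin n) ℝ) (hnn : ∀ i j, 0 ≤ W i j)
    {U V : Finset (Fin n)} (hUV : U ⊆ V) : gvol W U ≤ gvol W V :=
  Finset.sum_le_sum_of_subset_of_nonneg hUV fun i _ _ => gdeg_nonneg W hnn i

lemma isoNum_le_of (W : Matrix (Fin n) (Fin n) ℝ) (hnn : ∀ i j, 0 ≤ W i j)
    (hd : ∀ i, 0 < gdeg W i) {U : Finset (Fin n)} {c : ℝ} (hU : U.Nonempty)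
    (hvol : gvol W U ≤ 1/2) (hc : wcut W U Uᶜ ≤ c * gvol W U) : isoNum W ≤ c := by
  have hvpos : 0 < gvol W U := gvol_pos W hd hU
  have hbdd : BddBelow {r | ∃ V : Finset (Fin n), V.Nonempty ∧ gvol W V ≤ 1/2 ∧
      r = wcut W V Vᶜ / gvol W V} := by
    refine ⟨0, ?_⟩
    rintro r ⟨V, hV, -, rfl⟩
    exact div_nonneg (wcut_nonneg W hnn _ _) (gvol_nonneg W hnn _)
  have hmem : wcut W U Uᶜ / gvol W U ∈ {r | ∃ V : Finset (Fin n), V.Nonempty ∧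
      gvol W V ≤ 1/2 ∧ r = wcut W V Vᶜ / gvol W V} := ⟨U, hU, hvol, rfl⟩
  calc isoNum W ≤ wcut W U Uᶜ / gvol W U := csInf_le hbdd hmem
    _ ≤ c := (div_le_iff₀ hvpos).2 hc

lemma wcut_symm (W : Matrix (Fin n) (Fin n) ℝ) (hsym : W.IsSymm)
    (X Y : Finset (Fin n)) : wcut W X Y = wcut W Y X := by
  unfold wcut
  rw [Finset.sum_comm (f := fun i j => W i j)]
  refine Finset.sum_congr rfl fun j _ => Finset.sum_congr rfl fun i _ => ?_
  have := congrFun (congrFun hsym.eq j) i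
  simpa [Matrix.transpose_apply] using this

lemma sum_sq_row (W : Matrix (Fin n) (Fin n) ℝ) (f : Fin n → ℝ) :
    ∑ i, ∑ j, W i j * f i ^ 2 = ∑ i, gdeg W i * f i ^ 2 := by
  refine Finset.sum_congr rfl fun i _ => ?_
  rw [gdeg, Finset.sum_mul]

lemma sum_sq_col (W : Matrix (Fin n) (Fin n) ℝ) (hsym : W.IsSymm) (f : Fin n → ℝ) :
    ∑ i, ∑ j, W i j * f j ^ 2 = ∑ i, gdeg W i * f i ^ 2 := by
  rw [Finset.sum_comm]
  refine Finset.sum_congr rfl fun j _ => ?_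
  rw [← col_sum W hsym j, Finset.sum_mul]

end Stmt5Aux
namespace Stmt5Aux

open Finset Matrix

variable {n : ℕ}

/-- telescoping sum over `Ico` -/
lemma tel_Ico (c : ℕ → ℝ) {a b : ℕ} (h : a ≤ b) :
    ∑ r ∈ Finset.Ico a b, (c (r+1) - c r) = c b - c a := by
  induction b with
  | zero => interval_cases a; simp
  | succ b ih =>
    rcases Nat.lt_or_ge a (b+1) with hlt | hge
    · have hab : a ≤ b := by omega
      rw [Finset.sum_Ico_succ_top hab, ih hab]; ring
    · have : a = b + 1 := by omega
      subst this; simp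

/-- the sweep-cut lemma -/
lemma sweep (W : Matrix (Fin n) (Fin n) ℝ) (hsym : W.IsSymm) (hnn : ∀ i j, 0 ≤ W i j)
    (hd : ∀ i, 0 < gdeg W i) (lam : ℝ) (hlam : 0 ≤ lam) (f : Fin n → ℝ) (hf0 : ∀ i, 0 ≤ f i)
    (hpos : ∃ i, 0 < f i) (hzero : ∃ i, f i = 0)
    (hray : ∑ i, ∑ j, W i j * (f i - f j)^2 ≤ 2 * lam * ∑ i, gdeg W i * f i ^ 2) :
    ∃ U : Finset (Fin n), U.Nonempty ∧ (∀ i ∈ U, 0 < f i) ∧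
      wcut W U Uᶜ ≤ Real.sqrt (2 * lam) * gvol W U := by
  classical
  obtain ⟨i₀, hi₀⟩ := hpos
  have hn : 0 < n := i₀.pos
  set β : Fin n → ℝ := fun i => f i ^ 2 with hβdef
  set σ : Equiv.Perm (Fin n) := Tuple.sort β with hσdef
  have hmono : Monotone (β ∘ σ) := Tuple.monotone_sort β
  set rk : Fin n → ℕ := fun i => ((σ.symm i : Fin n) : ℕ) with hrkdef
  have hrk_lt : ∀ i, rk i < n := fun i => (σ.symm i).2
  set c : ℕ → ℝ := fun r => β (σ ⟨min r (n-1), by omega⟩) with hcdef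
  have hc_mono : Monotone c := by
    intro a b hab
    exact hmono (show (⟨min a (n-1), by omega⟩ : Fin n) ≤ ⟨min b (n-1), by omega⟩ by
      simp only [Fin.mk_le_mk]; omega)
  have hc_rk : ∀ i, c (rk i) = β i := by
    intro i
    have h1 : (⟨min (rk i) (n-1), by omega⟩ : Fin n) = σ.symm i := by
      apply Fin.ext
      show min (rk i) (n-1) = rk i
      have := hrk_lt i
      omega
    rw [hcdef]
    simp only [h1, Equiv.apply_symm_apply]
  have hβ_nonneg : ∀ i, 0 ≤ β i := fun i => sq_nonneg _
  have hc_nonneg : ∀ r, 0 ≤ c r := fun r => hβ_nonneg _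
  have hc0 : c 0 = 0 := by
    obtain ⟨iz, hz⟩ := hzero
    have h1 : c 0 ≤ β iz := by
      rw [← hc_rk iz]; exact hc_mono (Nat.zero_le _)
    have h2 : β iz = 0 := by simp [hβdef, hz]
    exact le_antisymm (h2 ▸ h1) (hc_nonneg 0)
  set T : ℕ → Finset (Fin n) := fun r => univ.filter fun i => r < rk i with hTdef
  have hmemT : ∀ r i, i ∈ T r ↔ r < rk i := by intro r i; simp [hTdef]
  -- Identity A
  have idA : ∑ i, gdeg W i * β i
      = ∑ r ∈ Finset.range (n-1), (c (r+1) - c r) * gvol W (T r) := by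
    have inner : ∀ i : Fin n,
        ∑ r ∈ Finset.range (n-1), (if r < rk i then (c (r+1) - c r) else 0) = β i := by
      intro i
      rw [← Finset.sum_filter]
      have hfil : (Finset.range (n-1)).filter (fun r => r < rk i) = Finset.range (rk i) := by
        ext r
        simp only [Finset.mem_filter, Finset.mem_range]
        have := hrk_lt i
        omega
      rw [hfil]
      have htel : ∑ r ∈ Finset.range (rk i), (c (r+1) - c r) = c (rk i) - c 0 := by
        simpa using tel_Ico c (Nat.zero_le (rk i))
      rw [htel, hc0, hc_rk i, sub_zero]
    calc ∑ i, gdeg W i * β i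
        = ∑ i, ∑ r ∈ Finset.range (n-1),
            (if r < rk i then gdeg W i * (c (r+1) - c r) else 0) := by
          refine Finset.sum_congr rfl fun i _ => ?_
          rw [← inner i, Finset.mul_sum]
          exact Finset.sum_congr rfl fun r _ => by split <;> simp
      _ = ∑ r ∈ Finset.range (n-1), ∑ i,
            (if r < rk i then gdeg W i * (c (r+1) - c r) else 0) := Finset.sum_comm
      _ = ∑ r ∈ Finset.range (n-1), (c (r+1) - c r) * gvol W (T r) := by
          refine Finset.sum_congr rfl fun r _ => ?_
          rw [← Finset.sum_filter]
          rw [show gvol W (T r) = ∑ i ∈ T r, gdeg W i from rfl, mul_comm,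
            ← Finset.sum_mul, hTdef]
  -- per-pair indicator
  set ind : ℕ → Fin n → Fin n → ℝ := fun r i j =>
    (if r < rk i ∧ ¬ r < rk j then (1:ℝ) else 0) +
    (if r < rk j ∧ ¬ r < rk i then (1:ℝ) else 0) with hinddef
  have pairOrd : ∀ i j : Fin n, rk i ≤ rk j →
      ∑ r ∈ Finset.range (n-1), (c (r+1) - c r) * ind r i j = β j - β i := by
    intro i j hij
    have hind : ∀ r, ind r i j = if rk i ≤ r ∧ r < rk j then (1:ℝ) else 0 := by
      intro r
      by_cases h1 : r < rk i
      · have h2 : r < rk j := lt_of_lt_of_le h1 hij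
        have h3 : ¬ (rk i ≤ r ∧ r < rk j) := by omega
        simp [hinddef, h1, h2, h3]
      · by_cases h2 : r < rk j
        · have h3 : rk i ≤ r ∧ r < rk j := by omega
          simp [hinddef, h1, h2, h3]
        · have h3 : ¬ (rk i ≤ r ∧ r < rk j) := by omega
          simp [hinddef, h1, h2, h3]
    calc ∑ r ∈ Finset.range (n-1), (c (r+1) - c r) * ind r i j
        = ∑ r ∈ Finset.range (n-1),
            (if rk i ≤ r ∧ r < rk j then (c (r+1) - c r) else 0) := by
          refine Finset.sum_congr rfl fun r _ => ?_
          rw [hind r, mul_ite, mul_one, mul_zero]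
      _ = ∑ r ∈ Finset.Ico (rk i) (rk j), (c (r+1) - c r) := by
          rw [← Finset.sum_filter]
          apply Finset.sum_congr _ fun r _ => rfl
          ext r
          simp only [Finset.mem_filter, Finset.mem_range, Finset.mem_Ico]
          have := hrk_lt j
          omega
      _ = c (rk j) - c (rk i) := tel_Ico c hij
      _ = β j - β i := by rw [hc_rk, hc_rk]
  have pairAbs : ∀ i j : Fin n,
      ∑ r ∈ Finset.range (n-1), (c (r+1) - c r) * ind r i j = |β i - β j| := by
    intro i j
    rcases le_total (rk i) (rk j) with h | h
    · rw [pairOrd i j h, abs_sub_comm, abs_of_nonneg]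
      have : β i ≤ β j := by rw [← hc_rk i, ← hc_rk j]; exact hc_mono h
      linarith
    · have hcomm : ∀ r, ind r i j = ind r j i := by
        intro r; simp only [hinddef]; exact add_comm _ _
      calc ∑ r ∈ Finset.range (n-1), (c (r+1) - c r) * ind r i j
          = ∑ r ∈ Finset.range (n-1), (c (r+1) - c r) * ind r j i := by
            exact Finset.sum_congr rfl fun r _ => by rw [hcomm r]
        _ = β i - β j := pairOrd j i h
        _ = |β i - β j| := by
            rw [abs_of_nonneg]
            have : β j ≤ β i := by rw [← hc_rk i, ← hc_rk j]; exact hc_mono h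
            linarith
  -- Identity B
  have idB : ∑ i, ∑ j, W i j * |β i - β j|
      = ∑ r ∈ Finset.range (n-1), (c (r+1) - c r) * (2 * wcut W (T r) (T r)ᶜ) := by
    have percut : ∀ r, (∑ i, ∑ j, W i j * ind r i j) = 2 * wcut W (T r) (T r)ᶜ := by
      intro r
      have e1 : ∑ i, ∑ j, (if r < rk i ∧ ¬ r < rk j then W i j else 0)
          = wcut W (T r) (T r)ᶜ := by
        rw [show wcut W (T r) (T r)ᶜ = ∑ i ∈ T r, ∑ j ∈ (T r)ᶜ, W i j from rfl, hTdef,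
          Finset.compl_filter]
        simp only [Finset.sum_filter]
        refine Finset.sum_congr rfl fun i _ => ?_
        split_ifs with h1
        · refine Finset.sum_congr rfl fun j _ => ?_
          split_ifs <;> first | rfl | (exfalso; tauto)
        · refine (Finset.sum_eq_zero fun j _ => ?_)
          rw [if_neg]; tauto
      have e2 : ∑ i, ∑ j, (if r < rk j ∧ ¬ r < rk i then W i j else 0)
          = wcut W (T r) (T r)ᶜ := by
        rw [wcut_symm W hsym,
          show wcut W (T r)ᶜ (T r) = ∑ i ∈ (T r)ᶜ, ∑ j ∈ T r, W i j from rfl, hTdef,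
          Finset.compl_filter]
        simp only [Finset.sum_filter]
        refine Finset.sum_congr rfl fun i _ => ?_
        split_ifs with h1
        · refine (Finset.sum_eq_zero fun j _ => ?_)
          rw [if_neg]; tauto
        · refine Finset.sum_congr rfl fun j _ => ?_
          split_ifs <;> first | rfl | (exfalso; tauto)
      calc (∑ i, ∑ j, W i j * ind r i j)
          = ∑ i, ∑ j, ((if r < rk i ∧ ¬ r < rk j then W i j else 0)
              + (if r < rk j ∧ ¬ r < rk i then W i j else 0)) := by
            refine Finset.sum_congr rfl fun i _ => Finset.sum_congr rfl fun j _ => ?_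
            simp only [hinddef, mul_add, mul_ite, mul_one, mul_zero]
        _ = 2 * wcut W (T r) (T r)ᶜ := by
            simp only [Finset.sum_add_distrib, e1, e2]; ring
    calc ∑ i, ∑ j, W i j * |β i - β j|
        = ∑ i, ∑ j, ∑ r ∈ Finset.range (n-1), W i j * ((c (r+1) - c r) * ind r i j) := by
          refine Finset.sum_congr rfl fun i _ => Finset.sum_congr rfl fun j _ => ?_
          rw [← Finset.mul_sum, pairAbs i j]
      _ = ∑ r ∈ Finset.range (n-1), ∑ i, ∑ j, W i j * ((c (r+1) - c r) * ind r i j) :=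
          (Finset.sum_congr rfl fun i _ => Finset.sum_comm).trans Finset.sum_comm
      _ = ∑ r ∈ Finset.range (n-1), (c (r+1) - c r) * (2 * wcut W (T r) (T r)ᶜ) := by
          refine Finset.sum_congr rfl fun r _ => ?_
          rw [← percut r, Finset.mul_sum]
          refine Finset.sum_congr rfl fun i _ => ?_
          rw [Finset.mul_sum]
          exact Finset.sum_congr rfl fun j _ => by ring
  -- the mass
  set M : ℝ := ∑ i, gdeg W i * β i with hMdef
  have hMf : M = ∑ i, gdeg W i * f i ^ 2 := rfl
  have hM : 0 < M := by
    rw [hMdef]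
    refine Finset.sum_pos' (fun i _ => mul_nonneg (gdeg_nonneg W hnn i) (hβ_nonneg i))
      ⟨i₀, Finset.mem_univ _, mul_pos (hd i₀) (pow_pos hi₀ 2)⟩
  -- Cauchy-Schwarz bound
  set A : ℝ := ∑ i, ∑ j, W i j * |β i - β j| with hAdef
  have hA_nonneg : 0 ≤ A :=
    Finset.sum_nonneg fun i _ => Finset.sum_nonneg fun j _ =>
      mul_nonneg (hnn i j) (abs_nonneg _)
  have habsmul : ∀ i j : Fin n, |β i - β j| = |f i - f j| * (f i + f j) := by
    intro i j
    have h1 : β i - β j = (f i - f j) * (f i + f j) := by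
      show f i ^ 2 - f j ^ 2 = _
      ring
    rw [h1, abs_mul, abs_of_nonneg (add_nonneg (hf0 i) (hf0 j))]
  have hplus : ∑ i, ∑ j, W i j * (f i + f j) ^ 2 ≤ 4 * M := by
    have step : ∑ i, ∑ j, W i j * (f i + f j) ^ 2
        ≤ ∑ i, ∑ j, (2 * (W i j * f i ^ 2) + 2 * (W i j * f j ^ 2)) := by
      refine Finset.sum_le_sum fun i _ => Finset.sum_le_sum fun j _ => ?_
      have h := hnn i j
      nlinarith [sq_nonneg (f i - f j)]
    have r1 : ∑ i, ∑ j, (2:ℝ) * (W i j * f i ^ 2) = 2 * ∑ i, gdeg W i * f i ^ 2 := by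
      calc ∑ i, ∑ j, (2:ℝ) * (W i j * f i ^ 2)
          = ∑ i, (2:ℝ) * ∑ j, W i j * f i ^ 2 :=
            Finset.sum_congr rfl fun i _ => (Finset.mul_sum _ _ _).symm
        _ = 2 * ∑ i, ∑ j, W i j * f i ^ 2 := (Finset.mul_sum _ _ _).symm
        _ = 2 * ∑ i, gdeg W i * f i ^ 2 := by rw [sum_sq_row W f]
    have r2 : ∑ i, ∑ j, (2:ℝ) * (W i j * f j ^ 2) = 2 * ∑ i, gdeg W i * f i ^ 2 := by
      calc ∑ i, ∑ j, (2:ℝ) * (W i j * f j ^ 2)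
          = ∑ i, (2:ℝ) * ∑ j, W i j * f j ^ 2 :=
            Finset.sum_congr rfl fun i _ => (Finset.mul_sum _ _ _).symm
        _ = 2 * ∑ i, ∑ j, W i j * f j ^ 2 := (Finset.mul_sum _ _ _).symm
        _ = 2 * ∑ i, gdeg W i * f i ^ 2 := by rw [sum_sq_col W hsym f]
    calc ∑ i, ∑ j, W i j * (f i + f j) ^ 2
        ≤ ∑ i, ∑ j, (2 * (W i j * f i ^ 2) + 2 * (W i j * f j ^ 2)) := step
      _ = (∑ i, ∑ j, (2:ℝ) * (W i j * f i ^ 2))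
            + ∑ i, ∑ j, (2:ℝ) * (W i j * f j ^ 2) := by
          rw [← Finset.sum_add_distrib]
          exact Finset.sum_congr rfl fun i _ => Finset.sum_add_distrib
      _ = 4 * M := by rw [r1, r2, ← hMf]; ring
  have hCS : A ≤ 2 * Real.sqrt (2 * lam) * M := by
    have key : A = ∑ p : Fin n × Fin n,
        (Real.sqrt (W p.1 p.2) * |f p.1 - f p.2|)
          * (Real.sqrt (W p.1 p.2) * (f p.1 + f p.2)) := by
      rw [hAdef, Fintype.sum_prod_type]
      refine Finset.sum_congr rfl fun i _ => Finset.sum_congr rfl fun j _ => ?_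
      show W i j * |β i - β j| = _
      rw [habsmul i j,
        show (Real.sqrt (W i j) * |f i - f j|)
            * (Real.sqrt (W i j) * (f i + f j))
          = (Real.sqrt (W i j) * Real.sqrt (W i j))
            * (|f i - f j| * (f i + f j)) from by ring,
        Real.mul_self_sqrt (hnn _ _)]
    have sq1 : ∑ p : Fin n × Fin n, (Real.sqrt (W p.1 p.2) * |f p.1 - f p.2|) ^ 2
        = ∑ i, ∑ j, W i j * (f i - f j) ^ 2 := by
      rw [Fintype.sum_prod_type]
      exact Finset.sum_congr rfl fun i _ => Finset.sum_congr rfl fun j _ => by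
        rw [mul_pow, Real.sq_sqrt (hnn _ _), sq_abs]
    have sq2 : ∑ p : Fin n × Fin n, (Real.sqrt (W p.1 p.2) * (f p.1 + f p.2)) ^ 2
        = ∑ i, ∑ j, W i j * (f i + f j) ^ 2 := by
      rw [Fintype.sum_prod_type]
      exact Finset.sum_congr rfl fun i _ => Finset.sum_congr rfl fun j _ => by
        rw [mul_pow, Real.sq_sqrt (hnn _ _)]
    have hA2 : A ^ 2 ≤ (2 * lam * M) * (4 * M) := by
      have hcs := Finset.sum_mul_sq_le_sq_mul_sq Finset.univ
        (fun p : Fin n × Fin n => Real.sqrt (W p.1 p.2) * |f p.1 - f p.2|)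
        (fun p : Fin n × Fin n => Real.sqrt (W p.1 p.2) * (f p.1 + f p.2))
      rw [← key] at hcs
      rw [sq1, sq2] at hcs
      refine hcs.trans (mul_le_mul ?_ hplus ?_ ?_)
      · exact hray
      · exact Finset.sum_nonneg fun i _ => Finset.sum_nonneg fun j _ =>
          mul_nonneg (hnn i j) (sq_nonneg _)
      · positivity
    have hrhs : 0 ≤ 2 * Real.sqrt (2 * lam) * M := by positivity
    have hsq : (2 * Real.sqrt (2 * lam) * M) ^ 2 = (2 * lam * M) * (4 * M) := by
      rw [mul_pow, mul_pow, Real.sq_sqrt (by linarith : (0:ℝ) ≤ 2 * lam)]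
      ring
    calc A = Real.sqrt (A ^ 2) := (Real.sqrt_sq hA_nonneg).symm
      _ ≤ Real.sqrt ((2 * Real.sqrt (2 * lam) * M) ^ 2) :=
          Real.sqrt_le_sqrt (by rw [hsq]; exact hA2)
      _ = 2 * Real.sqrt (2 * lam) * M := Real.sqrt_sq hrhs
  -- conclusion by contradiction
  by_contra hcon
  push_neg at hcon
  have hterm : ∀ r, r ∈ Finset.range (n-1) → 0 < c (r+1) - c r →
      Real.sqrt (2 * lam) * gvol W (T r) < wcut W (T r) (T r)ᶜ := by
    intro r hr hΔ
    have hne : (T r).Nonempty := by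
      refine ⟨σ ⟨n-1, by omega⟩, ?_⟩
      rw [hmemT]
      have hrkσ : rk (σ ⟨n-1, by omega⟩) = n-1 := by
        show ((σ.symm (σ ⟨n-1, by omega⟩) : Fin n) : ℕ) = n-1
        rw [Equiv.symm_apply_apply]
      rw [hrkσ]
      exact Finset.mem_range.1 hr
    have hposT : ∀ i ∈ T r, 0 < f i := by
      intro i hi
      rw [hmemT] at hi
      have h1 : c (r+1) ≤ β i := by
        rw [← hc_rk i]; exact hc_mono hi
      have h2 : 0 < β i := lt_of_lt_of_le (by linarith [hc_nonneg r]) h1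
      rcases (hf0 i).lt_or_eq with h | h
      · exact h
      · exfalso
        have hβi : β i = f i ^ 2 := rfl
        rw [hβi, ← h] at h2
        norm_num at h2
    exact hcon (T r) hne hposT
  have hΔ_nonneg : ∀ r, 0 ≤ c (r+1) - c r := fun r => by
    linarith [hc_mono (Nat.le_succ r)]
  have hΔex : ∃ r ∈ Finset.range (n-1), 0 < c (r+1) - c r := by
    by_contra hno
    push_neg at hno
    have hM0 : M = 0 := by
      rw [idA]
      refine Finset.sum_eq_zero fun r hr => ?_
      rw [show c (r+1) - c r = 0 from le_antisymm (hno r hr) (hΔ_nonneg r), zero_mul]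
    linarith
  obtain ⟨r₀, hr₀, hΔ₀⟩ := hΔex
  have hsum_lt : ∑ r ∈ Finset.range (n-1),
        (c (r+1) - c r) * (Real.sqrt (2 * lam) * gvol W (T r))
      < ∑ r ∈ Finset.range (n-1), (c (r+1) - c r) * wcut W (T r) (T r)ᶜ := by
    refine Finset.sum_lt_sum (fun r hr => ?_) ⟨r₀, hr₀, ?_⟩
    · rcases (hΔ_nonneg r).lt_or_eq with h | h
      · exact mul_le_mul_of_nonneg_left (hterm r hr h).le h.le
      · rw [← h, zero_mul, zero_mul]
    · exact (mul_lt_mul_iff_right₀ hΔ₀).2 (hterm r₀ hr₀ hΔ₀)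
  have lhs_eq : ∑ r ∈ Finset.range (n-1),
      (c (r+1) - c r) * (Real.sqrt (2 * lam) * gvol W (T r))
      = Real.sqrt (2 * lam) * M := by
    rw [idA, Finset.mul_sum]
    exact Finset.sum_congr rfl fun r _ => by ring
  have rhs_eq : ∑ r ∈ Finset.range (n-1), (c (r+1) - c r) * wcut W (T r) (T r)ᶜ
      = A / 2 := by
    rw [idB, Finset.sum_div]
    exact Finset.sum_congr rfl fun r _ => by ring
  rw [lhs_eq, rhs_eq] at hsum_lt
  linarith

end Stmt5Aux
namespace Stmt5Aux

open Finset Matrix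

variable {n : ℕ}

/-- from a "positive side of small volume" eigen-like function, find a sparse cut -/
lemma halfside (W : Matrix (Fin n) (Fin n) ℝ) (hsym : W.IsSymm) (hnn : ∀ i j, 0 ≤ W i j)
    (hd : ∀ i, 0 < gdeg W i) (hvol : gvol W Finset.univ = 1)
    (lam : ℝ) (hlam : 0 ≤ lam) (g : Fin n → ℝ)
    (heq : ∀ i, gdeg W i * g i - (∑ j, W i j * g j) = lam * (gdeg W i * g i))
    (hne : ∃ i, 0 < g i)
    (hhalf : gvol W (Finset.univ.filter fun i => 0 < g i) ≤ 1/2) :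
    ∃ U : Finset (Fin n), U.Nonempty ∧ gvol W U ≤ 1/2 ∧
      wcut W U Uᶜ ≤ Real.sqrt (2 * lam) * gvol W U := by
  classical
  set f : Fin n → ℝ := fun i => max (g i) 0 with hfdef
  have hf0 : ∀ i, 0 ≤ f i := fun i => le_max_right _ _
  have hfg : ∀ i, 0 < f i ↔ 0 < g i := by
    intro i
    constructor
    · intro h
      rcases le_or_gt (g i) 0 with h' | h'
      · exfalso
        have : f i = 0 := max_eq_right h'
        rw [this] at h; exact lt_irrefl 0 h
      · exact h'
    · intro h
      have : f i = g i := max_eq_left h.le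
      rw [this]; exact h
  have hpos : ∃ i, 0 < f i := by
    obtain ⟨i, hi⟩ := hne; exact ⟨i, (hfg i).2 hi⟩
  have hzero : ∃ i, f i = 0 := by
    by_contra hno
    push_neg at hno
    have hall : ∀ i, 0 < g i := fun i => (hfg i).1 ((hf0 i).lt_of_ne (Ne.symm (hno i)))
    have : (Finset.univ.filter fun i => 0 < g i) = Finset.univ := by
      apply Finset.filter_true_of_mem; intro i _; exact hall i
    rw [this, hvol] at hhalf
    norm_num at hhalf
  -- key quadratic form bound
  have hfgsq : ∀ i, f i * g i = f i ^ 2 := by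
    intro i
    rcases lt_or_ge 0 (g i) with h | h
    · rw [show f i = g i from max_eq_left h.le]; ring
    · rw [show f i = 0 from max_eq_right h]; ring
  have hsum1 : ∑ i, (gdeg W i * f i ^ 2 - f i * ∑ j, W i j * g j)
      = lam * ∑ i, gdeg W i * f i ^ 2 := by
    rw [Finset.mul_sum]
    refine Finset.sum_congr rfl fun i _ => ?_
    have h := heq i
    have h2 := congrArg (fun z => f i * z) h
    try simp only at h2
    calc gdeg W i * f i ^ 2 - f i * ∑ j, W i j * g j
        = f i * (gdeg W i * g i - ∑ j, W i j * g j) := by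
          rw [mul_sub]
          congr 1
          rw [show f i * (gdeg W i * g i) = gdeg W i * (f i * g i) from by ring, hfgsq i]
      _ = f i * (lam * (gdeg W i * g i)) := by rw [h]
      _ = lam * (gdeg W i * (f i * g i)) := by ring
      _ = lam * (gdeg W i * f i ^ 2) := by rw [hfgsq i]
  have hdom : ∀ i, f i * ∑ j, W i j * g j ≤ f i * ∑ j, W i j * f j := by
    intro i
    apply mul_le_mul_of_nonneg_left _ (hf0 i)
    refine Finset.sum_le_sum fun j _ => ?_
    exact mul_le_mul_of_nonneg_left (le_max_left _ _) (hnn i j)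
  have hquad : ∑ i, gdeg W i * f i ^ 2 - (∑ i, ∑ j, W i j * (f i * f j))
      ≤ lam * ∑ i, gdeg W i * f i ^ 2 := by
    have e1 : ∑ i, (gdeg W i * f i ^ 2 - f i * ∑ j, W i j * g j)
        = ∑ i, gdeg W i * f i ^ 2 - ∑ i, f i * ∑ j, W i j * g j :=
      Finset.sum_sub_distrib _ _
    have e2 : ∑ i, f i * (∑ j, W i j * g j) ≤ ∑ i, f i * ∑ j, W i j * f j :=
      Finset.sum_le_sum fun i _ => hdom i
    have e3 : ∑ i, f i * (∑ j, W i j * f j) = ∑ i, ∑ j, W i j * (f i * f j) := by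
      refine Finset.sum_congr rfl fun i _ => ?_
      rw [Finset.mul_sum]
      exact Finset.sum_congr rfl fun j _ => by ring
    rw [e1] at hsum1
    rw [← e3]
    linarith
  have hray : ∑ i, ∑ j, W i j * (f i - f j) ^ 2 ≤ 2 * lam * ∑ i, gdeg W i * f i ^ 2 := by
    have expand : ∑ i, ∑ j, W i j * (f i - f j) ^ 2
        = ∑ i, ∑ j, W i j * f i ^ 2 + ∑ i, ∑ j, W i j * f j ^ 2
          - 2 * ∑ i, ∑ j, W i j * (f i * f j) := by
      have e0 : ∑ i, ∑ j, W i j * (f i - f j) ^ 2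
          = ∑ i, ∑ j, (W i j * f i ^ 2 + W i j * f j ^ 2
            - 2 * (W i j * (f i * f j))) :=
        Finset.sum_congr rfl fun i _ => Finset.sum_congr rfl fun j _ => by ring
      rw [e0]
      simp only [Finset.sum_add_distrib, Finset.sum_sub_distrib, ← Finset.mul_sum]
    rw [expand, sum_sq_row W f, sum_sq_col W hsym f]
    linarith
  obtain ⟨U, hUne, hUpos, hUcut⟩ := sweep W hsym hnn hd lam hlam f hf0 hpos hzero hray
  refine ⟨U, hUne, ?_, hUcut⟩
  have hsub : U ⊆ Finset.univ.filter fun i => 0 < g i := by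
    intro i hi
    rw [Finset.mem_filter]
    exact ⟨Finset.mem_univ _, (hfg i).1 (hUpos i hi)⟩
  exact le_trans (gvol_mono W hnn hsub) hhalf

end Stmt5Aux
namespace Stmt5Aux

open Finset Matrix

variable {n : ℕ}

lemma normAdj_apply (W : Matrix (Fin n) (Fin n) ℝ) (i j : Fin n) :
    normAdj W i j = W i j / (Real.sqrt (gdeg W i) * Real.sqrt (gdeg W j)) := rfl

lemma normAdj_mulVec_sqrt (W : Matrix (Fin n) (Fin n) ℝ) (hd : ∀ i, 0 < gdeg W i) :
    normAdj W *ᵥ (fun i => Real.sqrt (gdeg W i)) = fun i => Real.sqrt (gdeg W i) := by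
  funext i
  show ∑ j, normAdj W i j * Real.sqrt (gdeg W j) = Real.sqrt (gdeg W i)
  have hterm : ∀ j, normAdj W i j * Real.sqrt (gdeg W j)
      = W i j / Real.sqrt (gdeg W i) := by
    intro j
    rw [normAdj_apply]
    have hi : Real.sqrt (gdeg W i) ≠ 0 := ne_of_gt (Real.sqrt_pos.2 (hd i))
    have hj : Real.sqrt (gdeg W j) ≠ 0 := ne_of_gt (Real.sqrt_pos.2 (hd j))
    rw [div_mul_eq_mul_div, div_eq_div_iff (mul_ne_zero hi hj) hi]
    ring
  rw [Finset.sum_congr rfl fun j _ => hterm j, ← Finset.sum_div]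
  rw [show (∑ j, W i j) = gdeg W i from rfl]
  exact Real.div_sqrt

lemma normLap_mulVec_sqrt (W : Matrix (Fin n) (Fin n) ℝ) (hd : ∀ i, 0 < gdeg W i) :
    normLap W *ᵥ (fun i => Real.sqrt (gdeg W i)) = 0 := by
  unfold normLap
  rw [Matrix.sub_mulVec, Matrix.one_mulVec, normAdj_mulVec_sqrt W hd]
  simp

lemma normLap_symm_apply (W : Matrix (Fin n) (Fin n) ℝ) (hsym : W.IsSymm) (i j : Fin n) :
    normLap W i j = normLap W j i := by
  have hW : W i j = W j i := by
    have := congrFun (congrFun hsym.eq i) j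
    simpa [Matrix.transpose_apply] using this.symm
  unfold normLap
  simp only [Matrix.sub_apply, normAdj_apply, Matrix.one_apply]
  rw [hW, mul_comm]
  congr 1
  by_cases h : i = j
  · simp [h]
  · simp [h, Ne.symm h]

lemma dot_mulVec_symm (M : Matrix (Fin n) (Fin n) ℝ) (hM : ∀ i j, M i j = M j i)
    (x y : Fin n → ℝ) : dotR (M *ᵥ x) y = dotR x (M *ᵥ y) := by
  unfold dotR
  calc ∑ i, (M *ᵥ x) i * y i
      = ∑ i, ∑ j, M i j * x j * y i := Finset.sum_congr rfl fun i _ => by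
        rw [show (M *ᵥ x) i = ∑ j, M i j * x j from rfl, Finset.sum_mul]
    _ = ∑ j, ∑ i, M i j * x j * y i := Finset.sum_comm
    _ = ∑ j, x j * (M *ᵥ y) j := Finset.sum_congr rfl fun j _ => by
        rw [show (M *ᵥ y) j = ∑ i, M j i * y i from rfl, Finset.mul_sum]
        exact Finset.sum_congr rfl fun i _ => by rw [hM i j]; ring

lemma eig_orth (W : Matrix (Fin n) (Fin n) ℝ) (hsym : W.IsSymm) (hd : ∀ i, 0 < gdeg W i)
    {lam : ℝ} (hlam : lam ≠ 0) {v : Fin n → ℝ} (hv : normLap W *ᵥ v = lam • v) :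
    ∑ i, Real.sqrt (gdeg W i) * v i = 0 := by
  have h1 := dot_mulVec_symm (normLap W) (normLap_symm_apply W hsym) v
    (fun i => Real.sqrt (gdeg W i))
  rw [hv, normLap_mulVec_sqrt W hd] at h1
  unfold dotR at h1
  simp only [Pi.smul_apply, smul_eq_mul, Pi.zero_apply, mul_zero, Finset.sum_const_zero] at h1
  have h2 : lam * ∑ i, v i * Real.sqrt (gdeg W i) = 0 := by
    rw [Finset.mul_sum]
    rw [← h1]
    exact Finset.sum_congr rfl fun i _ => by ring
  have h3 : ∑ i, v i * Real.sqrt (gdeg W i) = 0 := by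
    rcases mul_eq_zero.1 h2 with h | h
    · exact absurd h hlam
    · exact h
  rw [← h3]
  exact Finset.sum_congr rfl fun i _ => mul_comm _ _

lemma ker_is_const (W : Matrix (Fin n) (Fin n) ℝ) (hsym : W.IsSymm)
    (hnn : ∀ i j, 0 ≤ W i j) (hd : ∀ i, 0 < gdeg W i) (hconn : gConnected W)
    (x : Fin n → ℝ) (hx : normLap W *ᵥ x = 0) :
    ∃ cc : ℝ, ∀ i, x i = cc * Real.sqrt (gdeg W i) := by
  classical
  have hAx : normAdj W *ᵥ x = x := by
    have := hx
    unfold normLap at this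
    rw [Matrix.sub_mulVec, Matrix.one_mulVec, sub_eq_zero] at this
    exact this.symm
  set y : Fin n → ℝ := fun i => x i / Real.sqrt (gdeg W i) with hydef
  have hsq : ∀ i, (0:ℝ) < Real.sqrt (gdeg W i) := fun i => Real.sqrt_pos.2 (hd i)
  have hxy : ∀ i, x i = Real.sqrt (gdeg W i) * y i := by
    intro i
    rw [hydef]
    rw [mul_comm]
    exact (div_mul_cancel₀ (x i) (ne_of_gt (Real.sqrt_pos.2 (hd i)))).symm
  have hkey : ∀ i, ∑ j, W i j * y j = gdeg W i * y i := by
    intro i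
    have h1 := congrFun hAx i
    rw [show (normAdj W *ᵥ x) i = ∑ j, normAdj W i j * x j from rfl] at h1
    have h2 : ∀ j, normAdj W i j * x j = (W i j * y j) / Real.sqrt (gdeg W i) := by
      intro j
      rw [normAdj_apply, hxy j]
      have hi' : Real.sqrt (gdeg W i) ≠ 0 := ne_of_gt (hsq i)
      have hj' : Real.sqrt (gdeg W j) ≠ 0 := ne_of_gt (hsq j)
      rw [div_mul_eq_mul_div, div_eq_div_iff (mul_ne_zero hi' hj') hi']
      ring
    rw [Finset.sum_congr rfl fun j _ => h2 j, ← Finset.sum_div] at h1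
    have h3 : ∑ j, W i j * y j = Real.sqrt (gdeg W i) * x i := by
      rw [← h1, mul_comm]
      exact (div_mul_cancel₀ _ (ne_of_gt (hsq i))).symm
    rw [h3, hxy i, ← mul_assoc, Real.mul_self_sqrt (hd i).le]
  have hsumy : ∑ i, gdeg W i * y i ^ 2 = ∑ i, ∑ j, W i j * (y i * y j) := by
    rw [Finset.sum_congr rfl fun i (_ : i ∈ univ) => show gdeg W i * y i ^ 2
      = y i * (gdeg W i * y i) from by ring]
    refine Finset.sum_congr rfl fun i _ => ?_
    rw [← hkey i, Finset.mul_sum]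
    exact Finset.sum_congr rfl fun j _ => by ring
  have hQ : ∑ i, ∑ j, W i j * (y i - y j) ^ 2 = 0 := by
    have e0 : ∑ i, ∑ j, W i j * (y i - y j) ^ 2
        = ∑ i, ∑ j, (W i j * y i ^ 2 + W i j * y j ^ 2 - 2 * (W i j * (y i * y j))) :=
      Finset.sum_congr rfl fun i _ => Finset.sum_congr rfl fun j _ => by ring
    rw [e0]
    simp only [Finset.sum_add_distrib, Finset.sum_sub_distrib, ← Finset.mul_sum]
    rw [sum_sq_row W y, sum_sq_col W hsym y, ← hsumy]
    ring
  have hterm0 : ∀ i ∈ Finset.univ, ∀ j ∈ Finset.univ, W i j * (y i - y j) ^ 2 = 0 := by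
    have houter := (Finset.sum_eq_zero_iff_of_nonneg fun i _ =>
      Finset.sum_nonneg fun j _ => mul_nonneg (hnn i j) (sq_nonneg _)).1 hQ
    intro i hi
    exact (Finset.sum_eq_zero_iff_of_nonneg fun j _ =>
      mul_nonneg (hnn i j) (sq_nonneg _)).1 (houter i hi)
  have hstep : ∀ i j, W i j ≠ 0 → y i = y j := by
    intro i j hW
    have h := hterm0 i (Finset.mem_univ i) j (Finset.mem_univ j)
    rcases mul_eq_zero.1 h with h' | h'
    · exact absurd h' hW
    · exact sub_eq_zero.1 (sq_eq_zero_iff.1 h')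
  have hadj : ∀ i j, (SimpleGraph.fromRel fun a b => W a b ≠ 0).Adj i j → y i = y j := by
    intro i j hij
    rw [SimpleGraph.fromRel_adj] at hij
    rcases hij.2 with h | h
    · exact hstep i j h
    · exact (hstep j i h).symm
  have hconst : ∀ i j, y i = y j := by
    have hwalk : ∀ (i j : Fin n)
        (p : (SimpleGraph.fromRel fun a b => W a b ≠ 0).Walk i j), y i = y j := by
      intro i j p
      induction p with
      | nil => rfl
      | cons h q ih => exact (hadj _ _ h).trans ih
    intro i j
    obtain ⟨p⟩ := hconn.preconnected i j
    exact hwalk i j p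
  have hn : 0 < n := by
    obtain ⟨i⟩ := hconn.nonempty
    exact i.pos
  refine ⟨y ⟨0, hn⟩, fun i => ?_⟩
  rw [hxy i, hconst i ⟨0, hn⟩, mul_comm]

end Stmt5Aux
namespace Stmt5Aux

open Finset Matrix

variable {n : ℕ}

lemma dot_c_sqrt (W : Matrix (Fin n) (Fin n) ℝ) (hd : ∀ i, 0 < gdeg W i)
    (hvol : gvol W Finset.univ = 1) (a b : ℝ) :
    ∑ k, (a * Real.sqrt (gdeg W k)) * (b * Real.sqrt (gdeg W k)) = a * b := by
  have hsum1 : ∑ k, Real.sqrt (gdeg W k) * Real.sqrt (gdeg W k) = 1 := by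
    rw [← hvol]
    exact Finset.sum_congr rfl fun k _ => Real.mul_self_sqrt (hd k).le
  calc ∑ k, (a * Real.sqrt (gdeg W k)) * (b * Real.sqrt (gdeg W k))
      = ∑ k, (a * b) * (Real.sqrt (gdeg W k) * Real.sqrt (gdeg W k)) :=
        Finset.sum_congr rfl fun k _ => by ring
    _ = (a * b) * ∑ k, Real.sqrt (gdeg W k) * Real.sqrt (gdeg W k) :=
        (Finset.mul_sum _ _ _).symm
    _ = a * b := by rw [hsum1, mul_one]

lemma poscase (W : Matrix (Fin n) (Fin n) ℝ) (hsym : W.IsSymm) (hnn : ∀ i j, 0 ≤ W i j)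
    (hd : ∀ i, 0 < gdeg W i) (hvol : gvol W Finset.univ = 1)
    (lam2 : ℝ) (hzpos : 0 < lam2) (v : Fin n → ℝ)
    (hv : normLap W *ᵥ v = lam2 • v) (hvne : dotR v v = 1) :
    isoNum W ≤ Real.sqrt (2 * lam2) := by
  classical
  have hsq : ∀ i, (0:ℝ) < Real.sqrt (gdeg W i) := fun i => Real.sqrt_pos.2 (hd i)
  have horthv : ∑ i, Real.sqrt (gdeg W i) * v i = 0 :=
    eig_orth W hsym hd (ne_of_gt hzpos) hv
  set g : Fin n → ℝ := fun i => v i / Real.sqrt (gdeg W i) with hgdef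
  have hvg : ∀ i, v i = Real.sqrt (gdeg W i) * g i := by
    intro i
    rw [hgdef, mul_comm]
    exact (div_mul_cancel₀ (v i) (ne_of_gt (hsq i))).symm
  have h5 : ∀ i, Real.sqrt (gdeg W i) * v i = gdeg W i * g i := by
    intro i
    rw [hvg i, ← mul_assoc, Real.mul_self_sqrt (hd i).le]
  have heqg : ∀ i, gdeg W i * g i - (∑ j, W i j * g j) = lam2 * (gdeg W i * g i) := by
    intro i
    have hs : Real.sqrt (gdeg W i) ≠ 0 := ne_of_gt (hsq i)
    have h1 := congrFun hv i
    have h2 : (normLap W *ᵥ v) i = v i - ∑ j, normAdj W i j * v j := by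
      unfold normLap
      rw [Matrix.sub_mulVec, Matrix.one_mulVec]
      rfl
    have h3 : ∀ j, normAdj W i j * v j = (W i j * g j) / Real.sqrt (gdeg W i) := by
      intro j
      rw [normAdj_apply, hvg j, div_mul_eq_mul_div,
        div_eq_div_iff (mul_ne_zero (ne_of_gt (hsq i)) (ne_of_gt (hsq j))) hs]
      ring
    rw [h2, Finset.sum_congr rfl fun j _ => h3 j, ← Finset.sum_div,
      Pi.smul_apply, smul_eq_mul] at h1
    have h6 : Real.sqrt (gdeg W i) * (v i - (∑ j, W i j * g j) / Real.sqrt (gdeg W i))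
        = gdeg W i * g i - (∑ j, W i j * g j) := by
      rw [mul_sub, ← mul_div_assoc, mul_div_cancel_left₀ _ hs, h5 i]
    have h7 : Real.sqrt (gdeg W i) * (lam2 * v i) = lam2 * (gdeg W i * g i) := by
      rw [show Real.sqrt (gdeg W i) * (lam2 * v i)
        = lam2 * (Real.sqrt (gdeg W i) * v i) from by ring, h5 i]
    rw [← h6, ← h7, h1]
  have hsum0 : ∑ i, gdeg W i * g i = 0 := by
    rw [← horthv]
    exact Finset.sum_congr rfl fun i _ => (h5 i).symm
  have hgne : ∃ i, g i ≠ 0 := by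
    by_contra hno
    push_neg at hno
    have hv0 : ∀ i, v i = 0 := fun i => by rw [hvg i, hno i, mul_zero]
    unfold dotR at hvne
    rw [Finset.sum_eq_zero (fun i _ => by rw [hv0 i]; ring)] at hvne
    norm_num at hvne
  have hPne : ∃ i, 0 < g i := by
    by_contra hno
    push_neg at hno
    have hterm : ∀ i ∈ Finset.univ, gdeg W i * g i ≤ 0 := fun i _ =>
      mul_nonpos_iff.2 (Or.inl ⟨(hd i).le, hno i⟩)
    have hall0 := (Finset.sum_eq_zero_iff_of_nonpos hterm).1 hsum0
    obtain ⟨i, hi⟩ := hgne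
    have h := hall0 i (Finset.mem_univ i)
    rcases mul_eq_zero.1 h with h' | h'
    · exact absurd h' (ne_of_gt (hd i))
    · exact hi h'
  have hNne : ∃ i, 0 < -g i := by
    by_contra hno
    push_neg at hno
    have hterm : ∀ i ∈ Finset.univ, (0:ℝ) ≤ gdeg W i * g i := fun i _ =>
      mul_nonneg (hd i).le (by linarith [hno i])
    have hall0 := (Finset.sum_eq_zero_iff_of_nonneg hterm).1 hsum0
    obtain ⟨i, hi⟩ := hPne
    have h := hall0 i (Finset.mem_univ i)
    nlinarith [hd i]
  set P := Finset.univ.filter (fun i => 0 < g i) with hPdef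
  set N := Finset.univ.filter (fun i => 0 < -g i) with hNdef
  have hdisj : Disjoint P N := by
    rw [Finset.disjoint_left]
    intro a haP haN
    rw [hPdef, Finset.mem_filter] at haP
    rw [hNdef, Finset.mem_filter] at haN
    linarith [haP.2, haN.2]
  have hPN : gvol W P + gvol W N ≤ 1 := by
    rw [← hvol]
    rw [show gvol W P + gvol W N = gvol W (P ∪ N) from
      (congrArg _ rfl).trans (Finset.sum_union hdisj).symm]
    exact Finset.sum_le_sum_of_subset_of_nonneg (Finset.subset_univ _)
      fun k _ _ => (hd k).le
  rcases le_or_gt (gvol W P) (1/2) with hP | hP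
  · obtain ⟨U, hU1, hU2, hU3⟩ := halfside W hsym hnn hd hvol lam2 hzpos.le g heqg hPne hP
    exact isoNum_le_of W hnn hd hU1 hU2 hU3
  · have hN : gvol W N ≤ 1/2 := by linarith
    have heqg' : ∀ i, gdeg W i * (-g) i - (∑ j, W i j * (-g) j)
        = lam2 * (gdeg W i * (-g) i) := by
      intro i
      have h := heqg i
      have hs : ∑ j, W i j * (-g) j = -∑ j, W i j * g j := by
        rw [← Finset.sum_neg_distrib]
        exact Finset.sum_congr rfl fun j _ => by rw [Pi.neg_apply]; ring
      rw [hs, Pi.neg_apply]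
      ring_nf
      ring_nf at h
      linarith
    have hNne' : ∃ i, 0 < (-g) i := by
      obtain ⟨i, hi⟩ := hNne
      exact ⟨i, by rw [Pi.neg_apply]; exact hi⟩
    have hfilter : (Finset.univ.filter fun i => 0 < (-g) i) = N := by
      rw [hNdef]
      exact Finset.filter_congr fun i _ => by rw [Pi.neg_apply]
    obtain ⟨U, hU1, hU2, hU3⟩ := halfside W hsym hnn hd hvol lam2 hzpos.le (-g) heqg' hNne'
      (by rw [hfilter]; exact hN)
    exact isoNum_le_of W hnn hd hU1 hU2 hU3

end Stmt5Aux

/-- `h(G) ≤ min {1, √(2 λ₂)}`. -/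
theorem statement5 {n : ℕ} (hn : 2 ≤ n) (W : Matrix (Fin n) (Fin n) ℝ)
    (hsym : W.IsSymm) (hnn : ∀ i j, 0 ≤ W i j) (hdiag : ∀ i, W i i = 0)
    (hd : ∀ i, 0 < gdeg W i) (hvol : gvol W Finset.univ = 1) (hconn : gConnected W)
    (lam : Fin n → ℝ) (u : Fin n → Fin n → ℝ)
    (hmono : Monotone lam)
    (hortho : IsOrthonormalSys u)
    (heig : ∀ i, normLap W *ᵥ u i = lam i • u i)
    (h0 : lam ⟨0, by omega⟩ = 0) :
    isoNum W ≤ min 1 (Real.sqrt (2 * lam ⟨1, by omega⟩)) := by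
  classical
  open Stmt5Aux in
  have h1 : isoNum W ≤ 1 := by
    obtain ⟨i, -, hmin⟩ := Finset.exists_min_image Finset.univ (gdeg W)
      ⟨⟨0, by omega⟩, Finset.mem_univ _⟩
    have hexj : ∃ j : Fin n, j ≠ i := by
      by_cases h : i = ⟨0, by omega⟩
      · refine ⟨⟨1, by omega⟩, ?_⟩
        rw [h]
        intro hc
        simp [Fin.ext_iff] at hc
      · exact ⟨⟨0, by omega⟩, fun hc => h hc.symm⟩
    obtain ⟨j, hj⟩ := hexj
    have hsum2 : gdeg W i + gdeg W j ≤ 1 := by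
      rw [← hvol]
      calc gdeg W i + gdeg W j = ∑ k ∈ ({i, j} : Finset (Fin n)), gdeg W k :=
            (Finset.sum_pair (Ne.symm hj)).symm
        _ ≤ gvol W Finset.univ := Finset.sum_le_sum_of_subset_of_nonneg
            (Finset.subset_univ _) (fun k _ _ => (hd k).le)
    have hdi : gdeg W i ≤ 1/2 := by
      have := hmin j (Finset.mem_univ j)
      linarith
    have hwc : wcut W {i} ({i} : Finset (Fin n))ᶜ = gdeg W i := by
      have hsplit := Finset.sum_add_sum_compl ({i} : Finset (Fin n)) (W i)
      rw [Finset.sum_singleton, hdiag i, zero_add] at hsplit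
      unfold wcut
      rw [Finset.sum_singleton, hsplit]
      rfl
    refine Stmt5Aux.isoNum_le_of W hnn hd ⟨i, Finset.mem_singleton_self i⟩ ?_ ?_
    · rw [show gvol W {i} = gdeg W i from Finset.sum_singleton _ _]
      exact hdi
    · rw [hwc, show gvol W {i} = gdeg W i from Finset.sum_singleton _ _, one_mul]
  have hl1 : (0:ℝ) ≤ lam ⟨1, by omega⟩ := by
    have h := hmono (show (⟨0, by omega⟩ : Fin n) ≤ ⟨1, by omega⟩ from by
      rw [Fin.mk_le_mk]; omega)
    rw [h0] at h
    exact h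
  have h2 : isoNum W ≤ Real.sqrt (2 * lam ⟨1, by omega⟩) := by
    by_cases hz : lam ⟨1, by omega⟩ = 0
    · exfalso
      have hker0 : normLap W *ᵥ u ⟨0, by omega⟩ = 0 := by
        rw [heig, h0, zero_smul]
      have hker1 : normLap W *ᵥ u ⟨1, by omega⟩ = 0 := by
        rw [heig, hz, zero_smul]
      obtain ⟨c0, hc0⟩ := Stmt5Aux.ker_is_const W hsym hnn hd hconn _ hker0
      obtain ⟨c1, hc1⟩ := Stmt5Aux.ker_is_const W hsym hnn hd hconn _ hker1
      have h00 := hortho ⟨0, by omega⟩ ⟨0, by omega⟩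
      have h11 := hortho ⟨1, by omega⟩ ⟨1, by omega⟩
      have h01 := hortho ⟨0, by omega⟩ ⟨1, by omega⟩
      rw [if_pos rfl] at h00 h11
      rw [if_neg (by simp [Fin.ext_iff])] at h01
      unfold dotR at h00 h11 h01
      rw [Finset.sum_congr rfl (fun k _ => by rw [hc0 k]),
        Stmt5Aux.dot_c_sqrt W hd hvol c0 c0] at h00
      rw [Finset.sum_congr rfl (fun k _ => by rw [hc1 k]),
        Stmt5Aux.dot_c_sqrt W hd hvol c1 c1] at h11
      rw [Finset.sum_congr rfl (fun k _ => by rw [hc0 k, hc1 k]),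
        Stmt5Aux.dot_c_sqrt W hd hvol c0 c1] at h01
      nlinarith [h00, h11, h01]
    · have hzpos : 0 < lam ⟨1, by omega⟩ := lt_of_le_of_ne hl1 (Ne.symm hz)
      have hvne : dotR (u ⟨1, by omega⟩) (u ⟨1, by omega⟩) = 1 := by
        have h := hortho ⟨1, by omega⟩ ⟨1, by omega⟩
        rwa [if_pos rfl] at h
      exact Stmt5Aux.poscase W hsym hnn hd hvol _ hzpos (u ⟨1, by omega⟩)
        (heig ⟨1, by omega⟩) hvne
  exact le_min h1 h2

end
end

section
/- Let G=(V,W) be a connected edge-weighted graph on n ≥ 3 vertices with Vol(V)=1, let 0 = λ_1 < λ_2 ≤ λ_3 ≤ ... be the eigenvalues of the normalized Laplacian L_D, and let u_2 be a unit-norm eigenvector belonging to λ_2. Then the weighted 2-variance of the coordinates of the vector D^{-1/2}u_2 satisfies S_2²(D^{-1/2}u_2) ≤ λ_2/λ_3. -/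
open Finset Matrix

noncomputable section

section S8aux
lemma complete_of_orthonormal {n : ℕ} {u : Fin n → Fin n → ℝ} (h : IsOrthonormalSys u)
    (a b : Fin n) : (∑ i, u i a * u i b) = if a = b then 1 else 0 := by
  have hM : (Matrix.of u) * (Matrix.of u)ᵀ = 1 := by
    ext i j
    simpa [Matrix.mul_apply, Matrix.one_apply, dotR] using h i j
  have hM' := mul_eq_one_comm.mp hM
  have h2 : ((Matrix.of u)ᵀ * (Matrix.of u)) a b = (1 : Matrix (Fin n) (Fin n) ℝ) a b := by
    rw [hM']
  simpa [Matrix.mul_apply, Matrix.one_apply, mul_comm] using h2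

lemma expand_of_orthonormal {n : ℕ} {u : Fin n → Fin n → ℝ} (h : IsOrthonormalSys u)
    (v : Fin n → ℝ) (a : Fin n) : v a = ∑ i, dotR v (u i) * u i a := by
  have hc := complete_of_orthonormal h
  have : ∑ i, dotR v (u i) * u i a = ∑ b, v b * ∑ i, u i b * u i a := by
    unfold dotR
    simp only [Finset.sum_mul, Finset.mul_sum]
    rw [Finset.sum_comm]
    exact Finset.sum_congr rfl fun b _ => Finset.sum_congr rfl fun i _ => by ring
  rw [this]
  simp [hc]

lemma dot_mulVec_symm {n : ℕ} {M : Matrix (Fin n) (Fin n) ℝ} (h : ∀ i j, M i j = M j i)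
    (a b : Fin n → ℝ) : dotR (M *ᵥ a) b = dotR a (M *ᵥ b) := by
  unfold dotR Matrix.mulVec dotProduct
  simp only [Finset.sum_mul, Finset.mul_sum]
  rw [Finset.sum_comm]
  exact Finset.sum_congr rfl fun i _ => Finset.sum_congr rfl fun j _ => by rw [h i j]; ring

lemma spectral_dot {n : ℕ} {u : Fin n → Fin n → ℝ} {lam : Fin n → ℝ}
    {L : Matrix (Fin n) (Fin n) ℝ}
    (hortho : IsOrthonormalSys u) (heig : ∀ i, L *ᵥ u i = lam i • u i)
    (v : Fin n → ℝ) :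
    dotR v v = ∑ i, (dotR v (u i))^2 ∧
    dotR v (L *ᵥ v) = ∑ i, lam i * (dotR v (u i))^2 := by
  have hvexp := expand_of_orthonormal hortho v
  constructor
  · calc dotR v v = ∑ a, v a * v a := rfl
    _ = ∑ a, v a * ∑ i, dotR v (u i) * u i a := by
        refine Finset.sum_congr rfl fun a _ => by rw [← hvexp a]
    _ = ∑ i, (dotR v (u i))^2 := by
        simp only [Finset.mul_sum]
        rw [Finset.sum_comm]
        refine Finset.sum_congr rfl fun i _ => ?_
        have : ∑ a, v a * (dotR v (u i) * u i a) = dotR v (u i) * ∑ a, v a * u i a := by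
          rw [Finset.mul_sum]; exact Finset.sum_congr rfl fun a _ => by ring
        rw [this]; rw [show ∑ a, v a * u i a = dotR v (u i) from rfl]; ring
  · have hLv : ∀ a, (L *ᵥ v) a = ∑ i, dotR v (u i) * (lam i * u i a) := by
      intro a
      have : (L *ᵥ v) a = ∑ b, L a b * v b := rfl
      rw [this]
      calc ∑ b, L a b * v b = ∑ b, L a b * ∑ i, dotR v (u i) * u i b := by
            refine Finset.sum_congr rfl fun b _ => by rw [← hvexp b]
      _ = ∑ i, dotR v (u i) * ∑ b, L a b * u i b := by
            simp only [Finset.mul_sum]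
            rw [Finset.sum_comm]
            exact Finset.sum_congr rfl fun i _ => Finset.sum_congr rfl fun b _ => by ring
      _ = ∑ i, dotR v (u i) * (lam i * u i a) := by
            refine Finset.sum_congr rfl fun i _ => ?_
            have : ∑ b, L a b * u i b = (L *ᵥ u i) a := rfl
            rw [this, heig i]
            simp [smul_eq_mul]
    calc dotR v (L *ᵥ v) = ∑ a, v a * ∑ i, dotR v (u i) * (lam i * u i a) := by
          refine Finset.sum_congr rfl fun a _ => by rw [hLv a]
    _ = ∑ i, lam i * (dotR v (u i))^2 := by
          simp only [Finset.mul_sum]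
          rw [Finset.sum_comm]
          refine Finset.sum_congr rfl fun i _ => ?_
          have : ∑ a, v a * (dotR v (u i) * (lam i * u i a))
              = lam i * dotR v (u i) * ∑ a, v a * u i a := by
            rw [Finset.mul_sum]; exact Finset.sum_congr rfl fun a _ => by ring
          rw [this, show ∑ a, v a * u i a = dotR v (u i) from rfl]; ring

section
variable {n : ℕ} (W : Matrix (Fin n) (Fin n) ℝ)

lemma normLap_symm_entries (hsym : W.IsSymm) (i j : Fin n) :
    normLap W i j = normLap W j i := by
  have hw : W j i = W i j := congrFun (congrFun hsym i) j
  by_cases h : i = j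
  · rw [h]
  · have h' : ¬ (j = i) := fun hh => h hh.symm
    simp [normLap, normAdj, Matrix.one_apply, h, h', hw, mul_comm]

lemma normLap_mulVec_sqrt (hd : ∀ i, 0 < gdeg W i) :
    normLap W *ᵥ (fun i => Real.sqrt (gdeg W i)) = 0 := by
  funext a
  have hsa : Real.sqrt (gdeg W a) ≠ 0 := (Real.sqrt_pos.mpr (hd a)).ne'
  have h1 : ∀ b, W a b / (Real.sqrt (gdeg W a) * Real.sqrt (gdeg W b)) * Real.sqrt (gdeg W b)
      = W a b / Real.sqrt (gdeg W a) := by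
    intro b
    have hsb : Real.sqrt (gdeg W b) ≠ 0 := (Real.sqrt_pos.mpr (hd b)).ne'
    field_simp
  have h2 : (normLap W *ᵥ fun i => Real.sqrt (gdeg W i)) a
      = Real.sqrt (gdeg W a) - ∑ b, W a b / (Real.sqrt (gdeg W a) * Real.sqrt (gdeg W b)) * Real.sqrt (gdeg W b) := by
    have hb : ∀ b, (normLap W) a b * Real.sqrt (gdeg W b)
        = (if a = b then Real.sqrt (gdeg W b) else 0)
          - W a b / (Real.sqrt (gdeg W a) * Real.sqrt (gdeg W b)) * Real.sqrt (gdeg W b) := by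
      intro b
      simp only [normLap, Matrix.sub_apply, Matrix.one_apply, normAdj, Matrix.of_apply,
        sub_mul, ite_mul, one_mul, zero_mul]
    show (∑ b, normLap W a b * Real.sqrt (gdeg W b)) = _
    rw [Finset.sum_congr rfl fun b _ => hb b, Finset.sum_sub_distrib]
    congr 1
    simp
  rw [h2]
  simp only [h1]
  rw [← Finset.sum_div]
  have : (∑ b, W a b) = gdeg W a := rfl
  rw [this]
  have hsq : Real.sqrt (gdeg W a) * Real.sqrt (gdeg W a) = gdeg W a :=
    Real.mul_self_sqrt (hd a).le
  rw [show gdeg W a / Real.sqrt (gdeg W a) = Real.sqrt (gdeg W a) from by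
    rw [div_eq_iff hsa, hsq]]
  simp

lemma Qform (hd : ∀ i, 0 < gdeg W i) (f : Fin n → ℝ) :
    dotR (fun j => Real.sqrt (gdeg W j) * f j) (normLap W *ᵥ fun j => Real.sqrt (gdeg W j) * f j)
      = (∑ i, gdeg W i * f i ^ 2) - ∑ i, ∑ j, W i j * (f i * f j) := by
  have hs : ∀ i, Real.sqrt (gdeg W i) ≠ 0 := fun i => (Real.sqrt_pos.mpr (hd i)).ne'
  have hsq : ∀ i, Real.sqrt (gdeg W i) * Real.sqrt (gdeg W i) = gdeg W i :=
    fun i => Real.mul_self_sqrt (hd i).le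
  have hLv : ∀ a, (normLap W *ᵥ fun j => Real.sqrt (gdeg W j) * f j) a
      = Real.sqrt (gdeg W a) * f a - (∑ b, W a b * f b) / Real.sqrt (gdeg W a) := by
    intro a
    have h1 : ∀ b, W a b / (Real.sqrt (gdeg W a) * Real.sqrt (gdeg W b)) * (Real.sqrt (gdeg W b) * f b)
        = W a b * f b / Real.sqrt (gdeg W a) := by
      intro b; field_simp [hs a, hs b]
    have hb : ∀ b, (normLap W) a b * (Real.sqrt (gdeg W b) * f b)
        = (if a = b then Real.sqrt (gdeg W b) * f b else 0)
          - W a b / (Real.sqrt (gdeg W a) * Real.sqrt (gdeg W b)) * (Real.sqrt (gdeg W b) * f b) := by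
      intro b
      simp only [normLap, Matrix.sub_apply, Matrix.one_apply, normAdj, Matrix.of_apply,
        sub_mul, ite_mul, one_mul, zero_mul]
    show (∑ b, normLap W a b * (Real.sqrt (gdeg W b) * f b)) = _
    rw [Finset.sum_congr rfl fun b _ => hb b, Finset.sum_sub_distrib,
      Finset.sum_congr rfl (fun b _ => h1 b), ← Finset.sum_div]
    congr 1
    simp
  unfold dotR
  rw [Finset.sum_congr rfl (fun a _ => by rw [hLv a])]
  have key : ∀ a, Real.sqrt (gdeg W a) * f a *
      (Real.sqrt (gdeg W a) * f a - (∑ b, W a b * f b) / Real.sqrt (gdeg W a))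
      = gdeg W a * f a ^ 2 - ∑ b, W a b * (f a * f b) := by
    intro a
    rw [mul_sub]
    congr 1
    · calc Real.sqrt (gdeg W a) * f a * (Real.sqrt (gdeg W a) * f a)
          = (Real.sqrt (gdeg W a) * Real.sqrt (gdeg W a)) * f a ^ 2 := by ring
      _ = gdeg W a * f a ^ 2 := by rw [hsq a]
    · have hcanc : Real.sqrt (gdeg W a) * ((∑ b, W a b * f b) / Real.sqrt (gdeg W a))
          = ∑ b, W a b * f b := by
        rw [mul_div_assoc']
        exact mul_div_cancel_left₀ _ (hs a)
      have h3 : Real.sqrt (gdeg W a) * f a * ((∑ b, W a b * f b) / Real.sqrt (gdeg W a))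
          = f a * ∑ b, W a b * f b := by
        calc Real.sqrt (gdeg W a) * f a * ((∑ b, W a b * f b) / Real.sqrt (gdeg W a))
            = f a * (Real.sqrt (gdeg W a) * ((∑ b, W a b * f b) / Real.sqrt (gdeg W a))) := by ring
        _ = f a * ∑ b, W a b * f b := by rw [hcanc]
      rw [h3, Finset.mul_sum]
      exact Finset.sum_congr rfl fun b _ => by ring
  rw [Finset.sum_congr rfl (fun a _ => key a), Finset.sum_sub_distrib]

lemma energy_eq (hsym : W.IsSymm) (f : Fin n → ℝ) :
    ∑ i, ∑ j, W i j * (f i - f j) ^ 2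
      = 2 * ((∑ i, gdeg W i * f i ^ 2) - ∑ i, ∑ j, W i j * (f i * f j)) := by
  have hw : ∀ i j, W j i = W i j := fun i j => congrFun (congrFun hsym i) j
  have e1 : ∑ i, ∑ j, W i j * f i ^ 2 = ∑ i, gdeg W i * f i ^ 2 := by
    refine Finset.sum_congr rfl fun i _ => ?_
    rw [← Finset.sum_mul]; rfl
  have e2 : ∑ i, ∑ j, W i j * f j ^ 2 = ∑ i, gdeg W i * f i ^ 2 := by
    rw [Finset.sum_comm]
    refine Finset.sum_congr rfl fun j _ => ?_
    rw [← Finset.sum_mul]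
    rw [show (∑ i, W i j) = gdeg W j from by
      rw [show gdeg W j = ∑ i, W j i from rfl]
      exact Finset.sum_congr rfl fun i _ => hw j i]
  have expand : ∀ i j, W i j * (f i - f j) ^ 2
      = W i j * f i ^ 2 + W i j * f j ^ 2 - 2 * (W i j * (f i * f j)) := by
    intro i j; ring
  calc ∑ i, ∑ j, W i j * (f i - f j) ^ 2
      = ∑ i, ∑ j, (W i j * f i ^ 2 + W i j * f j ^ 2 - 2 * (W i j * (f i * f j))) := by
        exact Finset.sum_congr rfl fun i _ => Finset.sum_congr rfl fun j _ => expand i j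
    _ = (∑ i, ∑ j, W i j * f i ^ 2) + (∑ i, ∑ j, W i j * f j ^ 2)
        - 2 * (∑ i, ∑ j, W i j * (f i * f j)) := by
        simp only [Finset.sum_sub_distrib, Finset.sum_add_distrib, Finset.mul_sum]
    _ = 2 * ((∑ i, gdeg W i * f i ^ 2) - ∑ i, ∑ j, W i j * (f i * f j)) := by
        rw [e1, e2]; ring

lemma center_min (d x : Fin n → ℝ) (hd : ∀ j, 0 ≤ d j) (T : Finset (Fin n)) (t : ℝ) :
    ∑ j ∈ T, d j * (x j - (∑ j ∈ T, d j)⁻¹ * ∑ j ∈ T, d j * x j) ^ 2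
      ≤ ∑ j ∈ T, d j * (x j - t) ^ 2 := by
  have hD0 : (0:ℝ) ≤ ∑ j ∈ T, d j := Finset.sum_nonneg fun j _ => hd j
  rcases eq_or_lt_of_le hD0 with h0 | h0
  · have hz : ∀ j ∈ T, d j = 0 :=
      (Finset.sum_eq_zero_iff_of_nonneg (fun j _ => hd j)).mp h0.symm
    have e : ∀ c : ℝ, ∑ j ∈ T, d j * (x j - c) ^ 2 = 0 := fun c =>
      Finset.sum_eq_zero fun j hj => by rw [hz j hj]; ring
    rw [e, e]
  · have hDne : (∑ j ∈ T, d j) ≠ 0 := ne_of_gt h0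
    have key : ∀ c : ℝ, ∑ j ∈ T, d j * (x j - c) ^ 2
        = (∑ j ∈ T, d j * x j ^ 2) - 2 * c * (∑ j ∈ T, d j * x j) + c ^ 2 * (∑ j ∈ T, d j) := by
      intro c
      simp only [Finset.mul_sum, Finset.sum_sub_distrib, Finset.sum_add_distrib]
      rw [← Finset.sum_sub_distrib, ← Finset.sum_add_distrib]
      exact Finset.sum_congr rfl fun j _ => by ring
    rw [key, key]
    set D := ∑ j ∈ T, d j with hD
    set m := ∑ j ∈ T, d j * x j with hm
    set c := D⁻¹ * m with hc
    have hcm : m = c * D := by rw [hc]; field_simp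
    rw [hcm]
    nlinarith [mul_nonneg h0.le (sq_nonneg (c - t))]

end
end S8aux


lemma s8_main {n : ℕ} (W : Matrix (Fin n) (Fin n) ℝ) (hsym : W.IsSymm)
    (hnn : ∀ i j, 0 ≤ W i j) (hd : ∀ i, 0 < gdeg W i) (hvol : gvol W Finset.univ = 1)
    (lam : Fin n → ℝ) (u : Fin n → Fin n → ℝ) (hmono : Monotone lam)
    (hortho : IsOrthonormalSys u) (heig : ∀ i, normLap W *ᵥ u i = lam i • u i)
    (i0 i1 i2 : Fin n) (h0v : (i0 : ℕ) = 0) (h1v : (i1 : ℕ) = 1) (h2v : (i2 : ℕ) = 2)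
    (hpos : 0 < lam i1) :
    S2var (gdeg W) (fun j => u i1 j / Real.sqrt (gdeg W j)) ≤ lam i1 / lam i2 := by
  set d : Fin n → ℝ := gdeg W with hdd
  set x : Fin n → ℝ := fun j => u i1 j / Real.sqrt (d j) with hxx
  have hdle : ∀ i, (0:ℝ) ≤ d i := fun i => (hd i).le
  have hspos : ∀ i, 0 < Real.sqrt (d i) := fun i => Real.sqrt_pos.mpr (hd i)
  have hsne : ∀ i, Real.sqrt (d i) ≠ 0 := fun i => (hspos i).ne'
  have hsq : ∀ i, Real.sqrt (d i) * Real.sqrt (d i) = d i :=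
    fun i => Real.mul_self_sqrt (hd i).le
  have hsx : ∀ j, Real.sqrt (d j) * x j = u i1 j := by
    intro j
    rw [hxx, mul_comm]
    exact div_mul_cancel₀ _ (hsne j)
  have hdsum : ∑ j, d j = 1 := hvol
  -- lam ordering
  have h12 : lam i1 ≤ lam i2 := hmono (Fin.le_def.mpr (by omega))
  have hpos2 : 0 < lam i2 := lt_of_lt_of_le hpos h12
  have hu11 : dotR (u i1) (u i1) = 1 := by simpa using hortho i1 i1
  have hLsym := normLap_symm_entries W hsym
  have hspec := spectral_dot hortho heig
  have hLs : normLap W *ᵥ (fun i => Real.sqrt (d i)) = 0 := normLap_mulVec_sqrt W hd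
  -- coefficients of sqrt-degree vector
  have hscoef : ∀ i : Fin n, i ≠ i0 → dotR (fun j => Real.sqrt (d j)) (u i) = 0 := by
    intro i hi
    have h1 : dotR (fun j => Real.sqrt (d j)) (normLap W *ᵥ u i) = 0 := by
      rw [← dot_mulVec_symm hLsym (fun j => Real.sqrt (d j)) (u i), hLs]
      simp [dotR]
    rw [heig i] at h1
    have h2 : dotR (fun j => Real.sqrt (d j)) (lam i • u i)
        = lam i * dotR (fun j => Real.sqrt (d j)) (u i) := by
      unfold dotR
      rw [Finset.mul_sum]
      exact Finset.sum_congr rfl fun a _ => by simp [smul_eq_mul]; ring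
    rw [h2] at h1
    have hiv : (i : ℕ) ≠ 0 := fun h => hi (Fin.ext (by omega))
    have hlpos : 0 < lam i := lt_of_lt_of_le hpos (hmono (Fin.le_def.mpr (by omega)))
    exact (mul_eq_zero.mp h1).resolve_left hlpos.ne'
  have hss1 : dotR (fun j => Real.sqrt (d j)) (fun j => Real.sqrt (d j)) = 1 := by
    calc dotR (fun j => Real.sqrt (d j)) (fun j => Real.sqrt (d j))
        = ∑ j, Real.sqrt (d j) * Real.sqrt (d j) := rfl
    _ = ∑ j, d j := Finset.sum_congr rfl fun j _ => hsq j
    _ = 1 := hdsum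
  have hτne : dotR (fun j => Real.sqrt (d j)) (u i0) ≠ 0 := by
    intro hτ
    have h := (hspec (fun j => Real.sqrt (d j))).1
    rw [hss1] at h
    have hz : ∑ i, (dotR (fun j => Real.sqrt (d j)) (u i))^2 = 0 := by
      apply Finset.sum_eq_zero
      intro i _
      by_cases hi : i = i0
      · rw [hi, hτ]; ring
      · rw [hscoef i hi]; ring
    rw [hz] at h
    norm_num at h
  -- orthogonality to u i0 from orthogonality to sqrt-degree
  have hvs0 : ∀ v : Fin n → ℝ, dotR v (fun j => Real.sqrt (d j)) = 0 → dotR v (u i0) = 0 := by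
    intro v hv
    have hexp : ∀ a, Real.sqrt (d a) = dotR (fun j => Real.sqrt (d j)) (u i0) * u i0 a := by
      intro a
      have h := expand_of_orthonormal hortho (fun j => Real.sqrt (d j)) a
      rw [Finset.sum_eq_single i0 (fun i _ hi => by rw [hscoef i hi]; ring)
        (fun h' => absurd (Finset.mem_univ i0) h')] at h
      exact h
    have h : dotR v (fun j => Real.sqrt (d j))
        = dotR (fun j => Real.sqrt (d j)) (u i0) * dotR v (u i0) := by
      have h1 : ∀ a, v a * Real.sqrt (d a)
          = dotR (fun j => Real.sqrt (d j)) (u i0) * (v a * u i0 a) := by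
        intro a; rw [hexp a]; ring
      calc dotR v (fun j => Real.sqrt (d j)) = ∑ a, v a * Real.sqrt (d a) := rfl
      _ = ∑ a, dotR (fun j => Real.sqrt (d j)) (u i0) * (v a * u i0 a) :=
          Finset.sum_congr rfl fun a _ => h1 a
      _ = dotR (fun j => Real.sqrt (d j)) (u i0) * ∑ a, v a * u i0 a := by
          rw [Finset.mul_sum]
      _ = dotR (fun j => Real.sqrt (d j)) (u i0) * dotR v (u i0) := rfl
    rw [h] at hv
    exact (mul_eq_zero.mp hv).resolve_left hτne
  -- moments of x
  have hdx0 : ∑ j, d j * x j = 0 := by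
    have h : ∀ j, d j * x j = Real.sqrt (d j) * u i1 j := by
      intro j
      calc d j * x j = (Real.sqrt (d j) * Real.sqrt (d j)) * x j := by rw [hsq j]
      _ = Real.sqrt (d j) * (Real.sqrt (d j) * x j) := by ring
      _ = Real.sqrt (d j) * u i1 j := by rw [hsx j]
    rw [Finset.sum_congr rfl fun j _ => h j]
    have hne10 : i1 ≠ i0 := fun h' => by rw [h'] at h1v; omega
    exact hscoef i1 hne10
  have hdx2 : ∑ j, d j * x j ^ 2 = 1 := by
    have h : ∀ j, d j * x j ^ 2 = u i1 j * u i1 j := by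
      intro j
      calc d j * x j ^ 2 = (Real.sqrt (d j) * x j) * (Real.sqrt (d j) * x j) := by
            rw [show (Real.sqrt (d j) * x j) * (Real.sqrt (d j) * x j)
                = (Real.sqrt (d j) * Real.sqrt (d j)) * x j ^ 2 from by ring, hsq j]
      _ = u i1 j * u i1 j := by rw [hsx j]
    rw [Finset.sum_congr rfl fun j _ => h j]
    exact hu11
  -- intermediate value for the balance function
  set B : ℝ → ℝ := fun γ => ∑ j, d j * x j * |x j - γ| with hB
  have hBcont : Continuous B := by
    apply continuous_finset_sum
    intro j _
    exact continuous_const.mul ((continuous_const.sub continuous_id).abs)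
  have hneU : (univ : Finset (Fin n)).Nonempty := ⟨i0, Finset.mem_univ _⟩
  set m0 := univ.inf' hneU x with hm0
  set M0 := univ.sup' hneU x with hM0
  have hm0le : ∀ j, m0 ≤ x j := fun j => Finset.inf'_le x (Finset.mem_univ j)
  have hM0ge : ∀ j, x j ≤ M0 := fun j => Finset.le_sup' x (Finset.mem_univ j)
  have hmM : m0 ≤ M0 := le_trans (hm0le i0) (hM0ge i0)
  have hBm0 : B m0 = 1 := by
    show ∑ j, d j * x j * |x j - m0| = 1
    have h : ∀ j, d j * x j * |x j - m0| = d j * x j ^ 2 - m0 * (d j * x j) := by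
      intro j
      rw [abs_of_nonneg (sub_nonneg.mpr (hm0le j))]; ring
    rw [Finset.sum_congr rfl fun j _ => h j, Finset.sum_sub_distrib, hdx2, ← Finset.mul_sum,
      hdx0]
    ring
  have hBM0 : B M0 = -1 := by
    show ∑ j, d j * x j * |x j - M0| = -1
    have h : ∀ j, d j * x j * |x j - M0| = M0 * (d j * x j) - d j * x j ^ 2 := by
      intro j
      rw [abs_of_nonpos (sub_nonpos.mpr (hM0ge j))]; ring
    rw [Finset.sum_congr rfl fun j _ => h j, Finset.sum_sub_distrib, hdx2, ← Finset.mul_sum,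
      hdx0]
    ring
  have h0mem : (0:ℝ) ∈ Set.Icc (B M0) (B m0) := by
    rw [hBm0, hBM0]; constructor <;> norm_num
  obtain ⟨γ0, hγIcc, hγ0⟩ := intermediate_value_Icc' hmM hBcont.continuousOn h0mem
  have hγ0' : ∑ j, d j * x j * |x j - γ0| = 0 := hγ0
  set α := ∑ j, d j * |x j - γ0| with hα
  set φ : Fin n → ℝ := fun j => |x j - γ0| - α with hφ
  have hφsum : ∑ j, d j * φ j = 0 := by
    have h : ∀ j, d j * φ j = d j * |x j - γ0| - α * d j := by
      intro j; rw [hφ]; ring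
    rw [Finset.sum_congr rfl fun j _ => h j, Finset.sum_sub_distrib, ← Finset.mul_sum, hdsum,
      hα]
    ring
  have hφx : ∑ j, d j * (x j * φ j) = 0 := by
    have h : ∀ j, d j * (x j * φ j) = d j * x j * |x j - γ0| - α * (d j * x j) := by
      intro j; rw [hφ]; ring
    rw [Finset.sum_congr rfl fun j _ => h j, Finset.sum_sub_distrib, hγ0', ← Finset.mul_sum,
      hdx0]
    ring
  -- the test vector
  set v : Fin n → ℝ := fun j => Real.sqrt (d j) * φ j with hv
  have hv1 : dotR v (u i1) = 0 := by
    have h : ∀ j, v j * u i1 j = d j * (x j * φ j) := by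
      intro j
      calc v j * u i1 j = (Real.sqrt (d j) * φ j) * (Real.sqrt (d j) * x j) := by
            rw [hv, hsx j]
      _ = (Real.sqrt (d j) * Real.sqrt (d j)) * (x j * φ j) := by ring
      _ = d j * (x j * φ j) := by rw [hsq j]
    show ∑ j, v j * u i1 j = 0
    rw [Finset.sum_congr rfl fun j _ => h j]
    exact hφx
  have hv0 : dotR v (u i0) = 0 := by
    apply hvs0
    have h : ∀ j, v j * Real.sqrt (d j) = d j * φ j := by
      intro j
      calc v j * Real.sqrt (d j) = (Real.sqrt (d j) * Real.sqrt (d j)) * φ j := by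
            rw [hv]; ring
      _ = d j * φ j := by rw [hsq j]
    show ∑ j, v j * Real.sqrt (d j) = 0
    rw [Finset.sum_congr rfl fun j _ => h j]
    exact hφsum
  have hT : dotR v v = ∑ j, d j * φ j ^ 2 := by
    unfold dotR
    refine Finset.sum_congr rfl fun j _ => ?_
    rw [hv]
    calc (Real.sqrt (d j) * φ j) * (Real.sqrt (d j) * φ j)
        = (Real.sqrt (d j) * Real.sqrt (d j)) * φ j ^ 2 := by ring
    _ = d j * φ j ^ 2 := by rw [hsq j]
  -- Rayleigh lower bound
  have hlow : lam i2 * (∑ j, d j * φ j ^ 2) ≤ dotR v (normLap W *ᵥ v) := by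
    rw [← hT, (hspec v).1, (hspec v).2, Finset.mul_sum]
    apply Finset.sum_le_sum
    intro i _
    by_cases hA : i = i0
    · rw [hA, hv0]; simp
    by_cases hB2 : i = i1
    · rw [hB2, hv1]; simp
    · have hA' : (i : ℕ) ≠ 0 := fun h => hA (Fin.ext (by omega))
      have hB' : (i : ℕ) ≠ 1 := fun h => hB2 (Fin.ext (by omega))
      exact mul_le_mul_of_nonneg_right (hmono (Fin.le_def.mpr (by omega))) (sq_nonneg _)
  -- energy comparison
  have hQv : dotR v (normLap W *ᵥ v)
      = (∑ i, d i * φ i ^ 2) - ∑ i, ∑ j, W i j * (φ i * φ j) := Qform W hd φ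
  have hQx : dotR (u i1) (normLap W *ᵥ u i1)
      = (∑ i, d i * x i ^ 2) - ∑ i, ∑ j, W i j * (x i * x j) := by
    have h := Qform W hd x
    have hfun : (fun j => Real.sqrt (gdeg W j) * x j) = u i1 := funext hsx
    rw [hfun] at h
    exact h
  have hlam2 : dotR (u i1) (normLap W *ᵥ u i1) = lam i1 := by
    rw [heig i1]
    have h : dotR (u i1) (lam i1 • u i1) = lam i1 * dotR (u i1) (u i1) := by
      unfold dotR
      rw [Finset.mul_sum]
      exact Finset.sum_congr rfl fun a _ => by simp [smul_eq_mul]; ring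
    rw [h, hu11, mul_one]
  have hEφ : ∑ i, ∑ j, W i j * (φ i - φ j) ^ 2
      = 2 * ((∑ i, d i * φ i ^ 2) - ∑ i, ∑ j, W i j * (φ i * φ j)) := energy_eq W hsym φ
  have hEx : ∑ i, ∑ j, W i j * (x i - x j) ^ 2
      = 2 * ((∑ i, d i * x i ^ 2) - ∑ i, ∑ j, W i j * (x i * x j)) := energy_eq W hsym x
  have hcontr : ∑ i, ∑ j, W i j * (φ i - φ j) ^ 2 ≤ ∑ i, ∑ j, W i j * (x i - x j) ^ 2 := by
    apply Finset.sum_le_sum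
    intro i _
    apply Finset.sum_le_sum
    intro j _
    apply mul_le_mul_of_nonneg_left _ (hnn i j)
    have h1 : |φ i - φ j| ≤ |x i - x j| := by
      have he : φ i - φ j = |x i - γ0| - |x j - γ0| := by rw [hφ]; ring
      rw [he]
      have h := abs_abs_sub_abs_le_abs_sub (x i - γ0) (x j - γ0)
      simpa [sub_sub_sub_cancel_right] using h
    calc (φ i - φ j) ^ 2 = |φ i - φ j| ^ 2 := (sq_abs _).symm
    _ ≤ |x i - x j| ^ 2 := by
        apply pow_le_pow_left₀ (abs_nonneg _) h1
    _ = (x i - x j) ^ 2 := sq_abs _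
  have hkey : lam i2 * (∑ j, d j * φ j ^ 2) ≤ lam i1 := by
    have h2 : dotR v (normLap W *ᵥ v) ≤ dotR (u i1) (normLap W *ᵥ u i1) := by
      rw [hQv, hQx]
      linarith [hcontr, hEφ, hEx]
    calc lam i2 * (∑ j, d j * φ j ^ 2) ≤ dotR v (normLap W *ᵥ v) := hlow
    _ ≤ dotR (u i1) (normLap W *ᵥ u i1) := h2
    _ = lam i1 := hlam2
  -- the partition
  set P : Fin n → Fin 2 := fun j => if γ0 < x j then 0 else 1 with hP
  have hex0 : ∃ j, γ0 < x j := by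
    by_contra hcon
    push_neg at hcon
    have h : ∑ j, d j * x j * |x j - γ0| = -1 := by
      have hh : ∀ j, d j * x j * |x j - γ0| = γ0 * (d j * x j) - d j * x j ^ 2 := by
        intro j
        rw [abs_of_nonpos (sub_nonpos.mpr (hcon j))]; ring
      rw [Finset.sum_congr rfl fun j _ => hh j, Finset.sum_sub_distrib, hdx2, ← Finset.mul_sum,
        hdx0]
      ring
    rw [hγ0'] at h
    norm_num at h
  have hex1 : ∃ j, ¬ γ0 < x j := by
    by_contra hcon
    push_neg at hcon
    have h : ∑ j, d j * x j * |x j - γ0| = 1 := by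
      have hh : ∀ j, d j * x j * |x j - γ0| = d j * x j ^ 2 - γ0 * (d j * x j) := by
        intro j
        rw [abs_of_nonneg (sub_nonneg.mpr (hcon j).le)]; ring
      rw [Finset.sum_congr rfl fun j _ => hh j, Finset.sum_sub_distrib, hdx2, ← Finset.mul_sum,
        hdx0]
      ring
    rw [hγ0'] at h
    norm_num at h
  have hPsurj : Function.Surjective P := by
    intro b
    fin_cases b
    · obtain ⟨j, hj⟩ := hex0
      exact ⟨j, by simp [hP, hj]⟩
    · obtain ⟨j, hj⟩ := hex1
      exact ⟨j, by simp [hP, hj]⟩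
  -- the 2-variance bound
  have hbdd : BddBelow {r | ∃ Q : Fin n → Fin 2, Function.Surjective Q ∧ r = sVar d x Q} := by
    refine ⟨0, ?_⟩
    rintro r ⟨Q, hQ, rfl⟩
    apply Finset.sum_nonneg
    intro a _
    apply Finset.sum_nonneg
    intro j _
    exact mul_nonneg (hdle j) (sq_nonneg _)
  have hS2 : S2var d x ≤ sVar d x P :=
    csInf_le hbdd ⟨P, hPsurj, rfl⟩
  set t : Fin 2 → ℝ := fun a => if a = 0 then γ0 + α else γ0 - α with ht
  have hvar : sVar d x P ≤ ∑ j, d j * φ j ^ 2 := by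
    have hstep1 : sVar d x P ≤ ∑ a : Fin 2, ∑ j ∈ partSet P a, d j * (x j - t a) ^ 2 := by
      apply Finset.sum_le_sum
      intro a _
      exact center_min d x hdle (partSet P a) (t a)
    have hstep2 : ∑ a : Fin 2, ∑ j ∈ partSet P a, d j * (x j - t a) ^ 2
        = ∑ j, d j * φ j ^ 2 := by
      have hterm : ∀ a : Fin 2, ∀ j ∈ partSet P a, d j * (x j - t a) ^ 2 = d j * φ j ^ 2 := by
        intro a j hj
        have hPj : P j = a := by simpa [partSet] using hj
        congr 1
        fin_cases a
        · have hxj : γ0 < x j := by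
            by_contra hcon
            rw [hP] at hPj
            simp only [if_neg hcon] at hPj
            exact absurd hPj (by decide)
          show (x j - (γ0 + α)) ^ 2 = (|x j - γ0| - α) ^ 2
          rw [abs_of_nonneg (sub_nonneg.mpr hxj.le)]
          ring
        · have hxj : ¬ γ0 < x j := by
            intro hcon
            rw [hP] at hPj
            simp only [if_pos hcon] at hPj
            exact absurd hPj (by decide)
          push_neg at hxj
          show (x j - (γ0 - α)) ^ 2 = (|x j - γ0| - α) ^ 2
          rw [abs_of_nonpos (sub_nonpos.mpr hxj)]
          ring
      calc ∑ a : Fin 2, ∑ j ∈ partSet P a, d j * (x j - t a) ^ 2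
          = ∑ a : Fin 2, ∑ j ∈ partSet P a, d j * φ j ^ 2 :=
            Finset.sum_congr rfl fun a _ => Finset.sum_congr rfl (hterm a)
      _ = ∑ j, d j * φ j ^ 2 := by
            simp only [partSet]
            exact Finset.sum_fiberwise univ P (fun j => d j * φ j ^ 2)
    calc sVar d x P ≤ ∑ a : Fin 2, ∑ j ∈ partSet P a, d j * (x j - t a) ^ 2 := hstep1
    _ = ∑ j, d j * φ j ^ 2 := hstep2
  have hfinal : (∑ j, d j * φ j ^ 2) ≤ lam i1 / lam i2 := by
    rw [le_div_iff₀ hpos2]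
    calc (∑ j, d j * φ j ^ 2) * lam i2 = lam i2 * (∑ j, d j * φ j ^ 2) := by ring
    _ ≤ lam i1 := hkey
  calc S2var d x ≤ sVar d x P := hS2
  _ ≤ ∑ j, d j * φ j ^ 2 := hvar
  _ ≤ lam i1 / lam i2 := hfinal

/-- `S_2²(D^{-1/2} u₂) ≤ λ₂/λ₃`. -/
theorem statement8 {n : ℕ} (hn : 3 ≤ n) (W : Matrix (Fin n) (Fin n) ℝ)
    (hsym : W.IsSymm) (hnn : ∀ i j, 0 ≤ W i j) (hdiag : ∀ i, W i i = 0)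
    (hd : ∀ i, 0 < gdeg W i) (hvol : gvol W Finset.univ = 1) (hconn : gConnected W)
    (lam : Fin n → ℝ) (u : Fin n → Fin n → ℝ)
    (hmono : Monotone lam)
    (hortho : IsOrthonormalSys u)
    (heig : ∀ i, normLap W *ᵥ u i = lam i • u i)
    (h0 : lam ⟨0, by omega⟩ = 0)
    (hpos : 0 < lam ⟨1, by omega⟩) :
    S2var (gdeg W) (fun j => u ⟨1, by omega⟩ j / Real.sqrt (gdeg W j))
      ≤ lam ⟨1, by omega⟩ / lam ⟨2, by omega⟩ := by
  exact s8_main W hsym hnn hd hvol lam u hmono hortho heig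
    ⟨0, by omega⟩ ⟨1, by omega⟩ ⟨2, by omega⟩ rfl rfl rfl hpos

end
end

section
/- Let G=(V,W) be an edge-weighted graph with positive generalized degrees and Vol(V)=1, and let β_1 ≥ β_2 ≥ ... ≥ β_n be the eigenvalues of the normalized modularity matrix B_D. Then for every integer 2 ≤ k ≤ n, the minimum normalized k-way Newman–Girvan modularity satisfies min over k-partitions P_k of Q_k(P_k,G) ≥ Σ_{i=1}^k β_{n+1−i}. -/
open Finset Matrix

noncomputable section

lemma uComplete {n : ℕ} (u : Fin n → Fin n → ℝ) (hortho : IsOrthonormalSys u) :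
    ∀ p q, ∑ i, u i p * u i q = if p = q then 1 else 0 := by
  have hUU : (Matrix.of u) * (Matrix.of u)ᵀ = 1 := by
    ext i j
    have h := hortho i j
    simp only [dotR] at h
    simp only [Matrix.mul_apply, Matrix.transpose_apply, Matrix.of_apply, Matrix.one_apply]
    exact h
  have hUtU := Matrix.mul_eq_one_comm_of_equiv (Equiv.refl _) |>.mp hUU
  intro p q
  have h := congrFun (congrFun hUtU p) q
  simpa [Matrix.mul_apply, Matrix.one_apply] using h

lemma uExpand {n : ℕ} (u : Fin n → Fin n → ℝ) (hortho : IsOrthonormalSys u)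
    (x : Fin n → ℝ) (p : Fin n) : ∑ i, dotR x (u i) * u i p = x p := by
  simp only [dotR, Finset.sum_mul]
  rw [Finset.sum_comm]
  have h1 : ∀ q ∈ (univ : Finset (Fin n)), ∑ i, x q * u i q * u i p
      = x q * (if q = p then 1 else 0) := by
    intro q _
    rw [← uComplete u hortho q p, Finset.mul_sum]
    exact Finset.sum_congr rfl fun i _ => by ring
  rw [Finset.sum_congr rfl h1]
  simp

lemma uParseval {n : ℕ} (u : Fin n → Fin n → ℝ) (hortho : IsOrthonormalSys u)
    (x y : Fin n → ℝ) : ∑ i, dotR x (u i) * dotR y (u i) = dotR x y := by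
  have h1 : ∀ i ∈ (univ : Finset (Fin n)), dotR x (u i) * dotR y (u i)
      = ∑ p, y p * (dotR x (u i) * u i p) := by
    intro i _
    show dotR x (u i) * (∑ p, y p * u i p) = _
    rw [Finset.mul_sum]
    exact Finset.sum_congr rfl fun p _ => by ring
  rw [Finset.sum_congr rfl h1, Finset.sum_comm]
  have h2 : ∀ p ∈ (univ : Finset (Fin n)), ∑ i, y p * (dotR x (u i) * u i p)
      = y p * x p := by
    intro p _
    rw [← Finset.mul_sum, uExpand u hortho x p]
  rw [Finset.sum_congr rfl h2]
  simp only [dotR]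
  exact Finset.sum_congr rfl fun p _ => by ring

def zvec {n k : ℕ} (W : Matrix (Fin n) (Fin n) ℝ) (P : Fin n → Fin k) (a : Fin k) :
    Fin n → ℝ :=
  fun j => if P j = a then Real.sqrt (gdeg W j) / Real.sqrt (gvol W (partSet P a)) else 0

lemma zOrtho {n k : ℕ} (W : Matrix (Fin n) (Fin n) ℝ) (P : Fin n → Fin k)
    (hd : ∀ i, 0 < gdeg W i) (hVol : ∀ a, 0 < gvol W (partSet P a)) :
    IsOrthonormalSys (zvec W P) := by
  intro a b
  simp only [dotR, zvec]
  by_cases hab : a = b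
  · subst hab
    simp only [if_pos rfl]
    have h1 : ∀ j ∈ (univ : Finset (Fin n)),
        (if P j = a then Real.sqrt (gdeg W j) / Real.sqrt (gvol W (partSet P a)) else 0) *
        (if P j = a then Real.sqrt (gdeg W j) / Real.sqrt (gvol W (partSet P a)) else 0)
        = if P j = a then gdeg W j / gvol W (partSet P a) else 0 := by
      intro j _
      by_cases h : P j = a
      · simp only [if_pos h]
        rw [div_mul_div_comm, Real.mul_self_sqrt (hd j).le, Real.mul_self_sqrt (hVol a).le]
      · simp [h]
    rw [Finset.sum_congr rfl h1, ← Finset.sum_filter, ← Finset.sum_div]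
    show gvol W (partSet P a) / gvol W (partSet P a) = 1
    exact div_self (hVol a).ne'
  · rw [if_neg hab]
    refine Finset.sum_eq_zero fun j _ => ?_
    by_cases h : P j = a
    · rw [if_pos h, if_neg (h ▸ hab ∘ Eq.symm ∘ (· ▸ rfl))]
      · ring
    · simp [h]

lemma termCalc (w dp dq V : ℝ) (hdp : 0 < dp) (hdq : 0 < dq) (hV : 0 < V) :
    Real.sqrt dp / Real.sqrt V *
      ((w / (Real.sqrt dp * Real.sqrt dq) - Real.sqrt dp * Real.sqrt dq) *
        (Real.sqrt dq / Real.sqrt V)) = V⁻¹ * (w - dp * dq) := by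
  set sp := Real.sqrt dp with hsp
  set sq := Real.sqrt dq with hsq
  set sV := Real.sqrt V with hsV
  have h1 : sp * sp = dp := Real.mul_self_sqrt hdp.le
  have h2 : sq * sq = dq := Real.mul_self_sqrt hdq.le
  have h3 : sV * sV = V := Real.mul_self_sqrt hV.le
  have hp0 : sp ≠ 0 := by positivity
  have hq0 : sq ≠ 0 := by positivity
  have hV0 : sV ≠ 0 := by positivity
  rw [← h1, ← h2, ← h3]
  field_simp

lemma zQuad {n k : ℕ} (W : Matrix (Fin n) (Fin n) ℝ) (P : Fin n → Fin k)
    (hd : ∀ i, 0 < gdeg W i) (hVol : ∀ a, 0 < gvol W (partSet P a)) (a : Fin k) :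
    dotR (zvec W P a) (modMat W *ᵥ zvec W P a)
      = (gvol W (partSet P a))⁻¹ *
        ∑ i ∈ partSet P a, ∑ j ∈ partSet P a, (W i j - gdeg W i * gdeg W j) := by
  simp only [dotR, Matrix.mulVec, dotProduct]
  have hinner : ∀ p, ∑ q, modMat W p q * zvec W P a q
      = ∑ q ∈ partSet P a,
          modMat W p q * (Real.sqrt (gdeg W q) / Real.sqrt (gvol W (partSet P a))) := by
    intro p
    simp only [partSet]
    rw [Finset.sum_filter]
    exact Finset.sum_congr rfl fun q _ => by
      simp only [zvec, partSet]; by_cases h : P q = a <;> simp [h]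
  have houter : ∀ p, zvec W P a p * ∑ q, modMat W p q * zvec W P a q
      = if P p = a then
          ∑ q ∈ partSet P a,
            (gvol W (partSet P a))⁻¹ * (W p q - gdeg W p * gdeg W q) else 0 := by
    intro p
    rw [hinner p]
    simp only [zvec]
    by_cases h : P p = a
    · rw [if_pos h, if_pos h, Finset.mul_sum]
      refine Finset.sum_congr rfl fun q _ => ?_
      simp only [modMat, normAdj, Matrix.sub_apply, Matrix.of_apply]
      exact termCalc (W p q) (gdeg W p) (gdeg W q) (gvol W (partSet P a))
        (hd p) (hd q) (hVol a)
    · simp [h]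
  rw [Finset.sum_congr rfl fun p _ => houter p]
  simp only [partSet]
  rw [← Finset.sum_filter, Finset.mul_sum]
  exact Finset.sum_congr rfl fun p _ => by rw [Finset.mul_sum]

lemma quadEig {n : ℕ} (M : Matrix (Fin n) (Fin n) ℝ) (beta : Fin n → ℝ)
    (u : Fin n → Fin n → ℝ) (hortho : IsOrthonormalSys u)
    (heig : ∀ i, M *ᵥ u i = beta i • u i) (x : Fin n → ℝ) :
    dotR x (M *ᵥ x) = ∑ i, beta i * dotR x (u i) ^ 2 := by
  have hMx : ∀ p, (M *ᵥ x) p = ∑ i, dotR x (u i) * (beta i * u i p) := by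
    intro p
    show ∑ q, M p q * x q = _
    have e1 : ∀ q ∈ (univ : Finset (Fin n)), M p q * x q
        = ∑ i, dotR x (u i) * (M p q * u i q) := by
      intro q _
      rw [← uExpand u hortho x q, Finset.mul_sum]
      · exact Finset.sum_congr rfl fun i _ => by ring
    rw [Finset.sum_congr rfl e1, Finset.sum_comm]
    refine Finset.sum_congr rfl fun i _ => ?_
    rw [← Finset.mul_sum]
    congr 1
    have := congrFun (heig i) p
    simpa [Matrix.mulVec, dotProduct] using this
  show ∑ p, x p * (M *ᵥ x) p = _
  have e2 : ∀ p ∈ (univ : Finset (Fin n)), x p * (M *ᵥ x) p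
      = ∑ i, (beta i * dotR x (u i)) * (x p * u i p) := by
    intro p _
    rw [hMx p, Finset.mul_sum]
    exact Finset.sum_congr rfl fun i _ => by ring
  rw [Finset.sum_congr rfl e2, Finset.sum_comm]
  refine Finset.sum_congr rfl fun i _ => ?_
  rw [← Finset.mul_sum]
  show (beta i * dotR x (u i)) * dotR x (u i) = _
  ring

lemma besselLe {k n : ℕ} (z : Fin k → Fin n → ℝ) (hz : IsOrthonormalSys z)
    (x : Fin n → ℝ) (hx : dotR x x = 1) : ∑ a, dotR (z a) x ^ 2 ≤ 1 := by
  have hE : (0:ℝ) ≤ ∑ p, (x p - ∑ a, dotR (z a) x * z a p) ^ 2 :=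
    Finset.sum_nonneg fun p _ => sq_nonneg _
  have hExp : ∑ p, (x p - ∑ a, dotR (z a) x * z a p) ^ 2
      = 1 - ∑ a, dotR (z a) x ^ 2 := by
    have e1 : ∀ p ∈ (univ : Finset (Fin n)), (x p - ∑ a, dotR (z a) x * z a p) ^ 2
        = x p * x p - 2 * (x p * ∑ a, dotR (z a) x * z a p)
          + (∑ a, dotR (z a) x * z a p) * (∑ b, dotR (z b) x * z b p) := by
      intro p _; ring
    rw [Finset.sum_congr rfl e1, Finset.sum_add_distrib, Finset.sum_sub_distrib,
      ← Finset.mul_sum]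
    have huu : ∑ p, x p * x p = 1 := hx
    have huw : ∑ p, x p * ∑ a, dotR (z a) x * z a p = ∑ a, dotR (z a) x ^ 2 := by
      have e : ∀ p ∈ (univ : Finset (Fin n)), x p * ∑ a, dotR (z a) x * z a p
          = ∑ a, dotR (z a) x * (z a p * x p) := by
        intro p _
        rw [Finset.mul_sum]
        exact Finset.sum_congr rfl fun a _ => by ring
      rw [Finset.sum_congr rfl e, Finset.sum_comm]
      refine Finset.sum_congr rfl fun a _ => ?_
      rw [← Finset.mul_sum]
      show dotR (z a) x * dotR (z a) x = _
      ring
    have hww : ∑ p, (∑ a, dotR (z a) x * z a p) * (∑ b, dotR (z b) x * z b p)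
        = ∑ a, dotR (z a) x ^ 2 := by
      have e : ∀ p ∈ (univ : Finset (Fin n)),
          (∑ a, dotR (z a) x * z a p) * (∑ b, dotR (z b) x * z b p)
          = ∑ a, ∑ b, (dotR (z a) x * dotR (z b) x) * (z a p * z b p) := by
        intro p _
        rw [Finset.sum_mul_sum]
        exact Finset.sum_congr rfl fun a _ => Finset.sum_congr rfl fun b _ => by ring
      rw [Finset.sum_congr rfl e, Finset.sum_comm]
      refine Finset.sum_congr rfl fun a _ => ?_
      rw [Finset.sum_comm]
      have e3 : ∀ b ∈ (univ : Finset (Fin k)),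
          ∑ p, (dotR (z a) x * dotR (z b) x) * (z a p * z b p)
          = (dotR (z a) x * dotR (z b) x) * (if a = b then 1 else 0) := by
        intro b _
        rw [← Finset.mul_sum]
        congr 1
        exact hz a b
      rw [Finset.sum_congr rfl e3]
      simp [Finset.sum_ite_eq, sq]
    rw [huu, huw, hww]; ring
  linarith

/-- `min_{P_k} Q_k(P_k, G) ≥ ∑_{i=1}^k β_{n+1-i}`. -/
theorem statement11 {n : ℕ} (W : Matrix (Fin n) (Fin n) ℝ)
    (hsym : W.IsSymm) (hnn : ∀ i j, 0 ≤ W i j) (hdiag : ∀ i, W i i = 0)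
    (hd : ∀ i, 0 < gdeg W i) (hvol : gvol W Finset.univ = 1)
    (beta : Fin n → ℝ) (u : Fin n → Fin n → ℝ)
    (hanti : Antitone beta)
    (hortho : IsOrthonormalSys u)
    (heig : ∀ i, modMat W *ᵥ u i = beta i • u i) :
    ∀ k : ℕ, 2 ≤ k → k ≤ n →
      ∀ P : Fin n → Fin k, Function.Surjective P →
        ∑ i ∈ univ.filter (fun i : Fin n => n - k ≤ (i : ℕ)), beta i ≤ QMod W P := by
  intro k hk2 hkn P hP
  have hVol : ∀ a, 0 < gvol W (partSet P a) := by
    intro a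
    obtain ⟨j, hj⟩ := hP a
    refine Finset.sum_pos (fun i _ => hd i) ⟨j, ?_⟩
    simp [partSet, hj]
  have hzortho := zOrtho W P hd hVol
  have hQ : QMod W P = ∑ i, beta i * ∑ a, dotR (zvec W P a) (u i) ^ 2 := by
    have h1 : QMod W P = ∑ a, dotR (zvec W P a) (modMat W *ᵥ zvec W P a) :=
      Finset.sum_congr rfl fun a _ => (zQuad W P hd hVol a).symm
    rw [h1, Finset.sum_congr rfl fun a _ =>
      quadEig (modMat W) beta u hortho heig (zvec W P a), Finset.sum_comm]
    exact Finset.sum_congr rfl fun i _ => (Finset.mul_sum _ _ _).symm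
  have ht0 : ∀ i, (0:ℝ) ≤ ∑ a, dotR (zvec W P a) (u i) ^ 2 :=
    fun i => Finset.sum_nonneg fun a _ => sq_nonneg _
  have ht1 : ∀ i, ∑ a, dotR (zvec W P a) (u i) ^ 2 ≤ 1 := by
    intro i
    refine besselLe (zvec W P) hzortho (u i) ?_
    simpa using hortho i i
  have htsum : ∑ i, ∑ a, dotR (zvec W P a) (u i) ^ 2 = (k:ℝ) := by
    rw [Finset.sum_comm]
    have h1 : ∀ a ∈ (univ : Finset (Fin k)), ∑ i, dotR (zvec W P a) (u i) ^ 2 = 1 := by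
      intro a _
      have hp := uParseval u hortho (zvec W P a) (zvec W P a)
      have hz1 : dotR (zvec W P a) (zvec W P a) = 1 := by simpa using hzortho a a
      calc ∑ i, dotR (zvec W P a) (u i) ^ 2
          = ∑ i, dotR (zvec W P a) (u i) * dotR (zvec W P a) (u i) :=
            Finset.sum_congr rfl fun i _ => sq (dotR (zvec W P a) (u i)) ▸ by rw [sq]
        _ = 1 := by rw [hp, hz1]
    rw [Finset.sum_congr rfl h1]
    simp
  have hlt : n - k < n := by omega
  have hcard : ∑ i : Fin n, (if n - k ≤ (i : ℕ) then (1:ℝ) else 0) = (k:ℝ) := by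
    rw [Finset.sum_boole]
    have hfc : (univ.filter (fun i : Fin n => n - k ≤ (i : ℕ))).card = k := by
      have he : (univ.filter (fun i : Fin n => n - k ≤ (i : ℕ)))
          = Finset.Ici (⟨n - k, hlt⟩ : Fin n) := by
        ext i; simp [Fin.le_def]
      rw [he, Fin.card_Ici]
      simp only [Fin.val_mk]
      omega
    rw [hfc]
  have key : ∀ i ∈ (univ : Finset (Fin n)),
      beta ⟨n - k, hlt⟩ * ((∑ a, dotR (zvec W P a) (u i) ^ 2)
        - (if n - k ≤ (i : ℕ) then (1:ℝ) else 0))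
      ≤ beta i * (∑ a, dotR (zvec W P a) (u i) ^ 2)
        - (if n - k ≤ (i : ℕ) then beta i else 0) := by
    intro i _
    by_cases h : n - k ≤ (i : ℕ)
    · rw [if_pos h, if_pos h]
      have hb : beta i ≤ beta ⟨n - k, hlt⟩ := by
        refine hanti ?_
        rw [Fin.le_def]
        simpa using h
      nlinarith [ht1 i, mul_nonneg (sub_nonneg.2 hb) (sub_nonneg.2 (ht1 i))]
    · rw [if_neg h, if_neg h]
      have hb : beta ⟨n - k, hlt⟩ ≤ beta i := by
        refine hanti ?_
        rw [Fin.le_def]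
        simp only [Fin.val_mk]
        omega
      simpa using mul_le_mul_of_nonneg_right hb (ht0 i)
  have hsum := Finset.sum_le_sum key
  have e1 : ∑ i : Fin n, beta ⟨n - k, hlt⟩ * ((∑ a, dotR (zvec W P a) (u i) ^ 2)
      - (if n - k ≤ (i : ℕ) then (1:ℝ) else 0)) = 0 := by
    rw [← Finset.mul_sum, Finset.sum_sub_distrib, htsum, hcard]
    ring
  have e2 : ∑ i : Fin n, (beta i * (∑ a, dotR (zvec W P a) (u i) ^ 2)
      - (if n - k ≤ (i : ℕ) then beta i else 0))
      = ∑ i, beta i * (∑ a, dotR (zvec W P a) (u i) ^ 2)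
        - ∑ i : Fin n, (if n - k ≤ (i : ℕ) then beta i else 0) :=
    Finset.sum_sub_distrib _ _
  rw [hQ, Finset.sum_filter]
  linarith [hsum, e1, e2]

end
end
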